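/- arXiv:1304.1315 — 6 statements merged into one kernel-verified Lean document; each statement's English description precedes it below -/
import Mathlib

section
/- Let k be odd and let G=(V,E) be a k-uniform connected nontrivial hypergraph with Laplacian tensor L and signless Laplacian tensor Q. Then λ(L) < λ(Q). -/
open Finset

variable {α : Type*} [DecidableEq α]

/-- The degree of a vertex `i`: the number of edges containing `i`. -/
def hdeg (E : Finset (Finset α)) (i : α) : ℕ := (E.filter (fun e => i ∈ e)).card

/-- The action of the Laplacian tensor: `(L x^{k-1})_i`. -/
def lapAct (k : ℕ) (E : Finset (Finset α)) (x : α → ℝ) (i : α) : ℝ :=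
  (hdeg E i : ℝ) * x i ^ (k - 1) - ∑ e ∈ E.filter (fun e => i ∈ e), ∏ j ∈ e.erase i, x j

/-- The action of the signless Laplacian tensor: `(Q x^{k-1})_i`. -/
def signAct (k : ℕ) (E : Finset (Finset α)) (x : α → ℝ) (i : α) : ℝ :=
  (hdeg E i : ℝ) * x i ^ (k - 1) + ∑ e ∈ E.filter (fun e => i ∈ e), ∏ j ∈ e.erase i, x j

/-- The action of the adjacency tensor: `(A x^{k-1})_i`. -/
def adjAct (E : Finset (Finset α)) (x : α → ℝ) (i : α) : ℝ :=
  ∑ e ∈ E.filter (fun e => i ∈ e), ∏ j ∈ e.erase i, x j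

/-- `lam` is an H-eigenvalue of the Laplacian tensor. -/
def IsLapEig (k : ℕ) (E : Finset (Finset α)) (lam : ℝ) : Prop :=
  ∃ x : α → ℝ, x ≠ 0 ∧ ∀ i, lapAct k E x i = lam * x i ^ (k - 1)

/-- `lam` is the largest H-eigenvalue of the Laplacian tensor. -/
def IsLargestLapEig (k : ℕ) (E : Finset (Finset α)) (lam : ℝ) : Prop :=
  IsLapEig k E lam ∧ ∀ mu : ℝ, IsLapEig k E mu → mu ≤ lam

/-- `lam` is an H-eigenvalue of the signless Laplacian tensor. -/
def IsSignEig (k : ℕ) (E : Finset (Finset α)) (lam : ℝ) : Prop :=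
  ∃ x : α → ℝ, x ≠ 0 ∧ ∀ i, signAct k E x i = lam * x i ^ (k - 1)

/-- `lam` is the largest H-eigenvalue of the signless Laplacian tensor. -/
def IsLargestSignEig (k : ℕ) (E : Finset (Finset α)) (lam : ℝ) : Prop :=
  IsSignEig k E lam ∧ ∀ mu : ℝ, IsSignEig k E mu → mu ≤ lam

/-- `lam` is an H-eigenvalue of the adjacency tensor. -/
def IsAdjEig (k : ℕ) (E : Finset (Finset α)) (lam : ℝ) : Prop :=
  ∃ x : α → ℝ, x ≠ 0 ∧ ∀ i, adjAct E x i = lam * x i ^ (k - 1)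

/-- `lam` is the largest H-eigenvalue of the adjacency tensor. -/
def IsLargestAdjEig (k : ℕ) (E : Finset (Finset α)) (lam : ℝ) : Prop :=
  IsAdjEig k E lam ∧ ∀ mu : ℝ, IsAdjEig k E mu → mu ≤ lam

/-- `G = (V, E)` is a `k`-uniform hyperstar of size `d`: there is a heart `h` and a
disjoint partition of the remaining vertices into `d` parts of size `k-1`, the edges
being the heart together with one part. -/
def IsHyperstar (k d : ℕ) (E : Finset (Finset α)) : Prop :=
  ∃ (h : α) (P : Fin d → Finset α),
    (∀ i, h ∉ P i) ∧
    (∀ i, (P i).card = k - 1) ∧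
    (∀ i j, i ≠ j → Disjoint (P i) (P j)) ∧
    (∀ v : α, v ≠ h → ∃ i, v ∈ P i) ∧
    E = Finset.image (fun i => insert h (P i)) Finset.univ

/-- The hypergraph is connected: any two distinct vertices are joined by a chain of
pairwise intersecting edges. -/
def IsConnectedH (E : Finset (Finset α)) : Prop :=
  ∀ i j : α, i ≠ j → Relation.TransGen (fun a b : α => ∃ e ∈ E, a ∈ e ∧ b ∈ e) i j

/-- For `k` even: the hypergraph is odd-bipartite. -/
def IsOddBipartite [Fintype α] (E : Finset (Finset α)) : Prop :=
  E = ∅ ∨ ∃ V₁ : Finset α, V₁ ≠ ∅ ∧ V₁ ≠ Finset.univ ∧ ∀ e ∈ E, Odd (e ∩ V₁).card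

/-- `G = (V, E)` is a `k`-uniform hypercycle of size `s`. -/
def IsHypercycle (k : ℕ) (s : ℕ) [NeZero s] (E : Finset (Finset α)) : Prop :=
  ∃ P : Fin s → Finset α,
    (∀ i, (P i).card = k) ∧
    (∀ v : α, ∃ i, v ∈ P i) ∧
    E = Finset.image P Finset.univ ∧
    (∀ i : Fin s, (P i ∩ P (i + 1)).card = 1) ∧
    (∀ i j : Fin s, i ≠ j → j ≠ i + 1 → i ≠ j + 1 → P i ∩ P j = ∅) ∧
    Function.Injective (fun i : Fin s => P i ∩ P (i + 1))
section Aux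

lemma signAct_eq (k : ℕ) (E : Finset (Finset α)) (y : α → ℝ) (i : α) :
    signAct k E y i = (hdeg E i : ℝ) * y i ^ (k - 1) + adjAct E y i := rfl

variable [Fintype α]

noncomputable def gfun (k : ℕ) (y : α → ℝ) : ℝ := ∑ i, y i ^ k

noncomputable def ffun (k : ℕ) (E : Finset (Finset α)) (y : α → ℝ) : ℝ :=
  (∑ i, (hdeg E i : ℝ) * y i ^ k) + k * ∑ e ∈ E, ∏ j ∈ e, y j

lemma gfun_smul (k : ℕ) (c : ℝ) (y : α → ℝ) :
    gfun k (fun i => c * y i) = c ^ k * gfun k y := by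
  rw [gfun, gfun, Finset.mul_sum]
  exact Finset.sum_congr rfl fun i _ => mul_pow c (y i) k

lemma ffun_smul {k : ℕ} (E : Finset (Finset α)) (hunif : ∀ e ∈ E, e.card = k)
    (c : ℝ) (y : α → ℝ) :
    ffun k E (fun i => c * y i) = c ^ k * ffun k E y := by
  rw [ffun, ffun]
  have h1 : ∀ i : α, (hdeg E i : ℝ) * (c * y i) ^ k = c ^ k * ((hdeg E i : ℝ) * y i ^ k) :=
    fun i => by rw [mul_pow]; ring
  have h2 : ∀ e ∈ E, ∏ j ∈ e, (c * y j) = c ^ k * ∏ j ∈ e, y j := fun e he => by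
    rw [Finset.prod_mul_distrib, Finset.prod_const, hunif e he]
  rw [Finset.sum_congr rfl fun i _ => h1 i, Finset.sum_congr rfl h2, ← Finset.mul_sum,
    ← Finset.mul_sum]
  ring

lemma gfun_nonneg {k : ℕ} {y : α → ℝ} (hy : ∀ i, 0 ≤ y i) : 0 ≤ gfun k y :=
  Finset.sum_nonneg fun i _ => pow_nonneg (hy i) k

lemma adjAct_nonneg {E : Finset (Finset α)} {y : α → ℝ} (hy : ∀ i, 0 ≤ y i) (i : α) :
    0 ≤ adjAct E y i :=
  Finset.sum_nonneg fun e _ => Finset.prod_nonneg fun j _ => hy j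

lemma continuous_gfun (k : ℕ) : Continuous (gfun (α := α) k) :=
  continuous_finset_sum _ fun i _ => (continuous_apply i).pow k

lemma continuous_ffun (k : ℕ) (E : Finset (Finset α)) : Continuous (ffun (α := α) k E) := by
  refine Continuous.add (continuous_finset_sum _ fun i _ => ?_) (Continuous.mul continuous_const
    (continuous_finset_sum _ fun e _ => continuous_finset_prod _ fun j _ => continuous_apply j))
  exact Continuous.mul continuous_const ((continuous_apply i).pow k)

lemma exists_max [Nonempty α] {k : ℕ} (hk : k ≠ 0) (E : Finset (Finset α))
    (hunif : ∀ e ∈ E, e.card = k) :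
    ∃ (y : α → ℝ) (lam : ℝ), (∀ i, 0 ≤ y i) ∧ gfun k y = 1 ∧ ffun k E y = lam ∧
      ∀ z : α → ℝ, (∀ i, 0 ≤ z i) → ffun k E z ≤ lam * gfun k z := by
  classical
  set K : Set (α → ℝ) := {y | (∀ i, 0 ≤ y i) ∧ gfun k y = 1} with hK
  have hKclosed : IsClosed K := by
    have h1 : IsClosed {y : α → ℝ | ∀ i, 0 ≤ y i} := by
      have he : {y : α → ℝ | ∀ i, 0 ≤ y i} = ⋂ i, {y | 0 ≤ y i} := by
        ext y; simp [Set.mem_iInter]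
      rw [he]
      exact isClosed_iInter fun i => isClosed_le continuous_const (continuous_apply i)
    have h2 : IsClosed {y : α → ℝ | gfun k y = 1} :=
      isClosed_eq (continuous_gfun k) continuous_const
    exact h1.inter h2
  have hKbdd : Bornology.IsBounded K := by
    refine (Metric.isBounded_closedBall (x := (0 : α → ℝ)) (r := 1)).subset ?_
    intro y hy
    rw [Metric.mem_closedBall, dist_pi_le_iff zero_le_one]
    intro i
    rw [Real.dist_eq, Pi.zero_apply, sub_zero, abs_of_nonneg (hy.1 i)]
    have h1 : y i ^ k ≤ 1 := by
      rw [← hy.2]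
      exact Finset.single_le_sum (f := fun j => y j ^ k)
        (fun j _ => pow_nonneg (hy.1 j) k) (Finset.mem_univ i)
    exact (pow_le_one_iff_of_nonneg (hy.1 i) hk).mp h1
  have hKcompact : IsCompact K := Metric.isCompact_iff_isClosed_bounded.mpr ⟨hKclosed, hKbdd⟩
  have hKne : K.Nonempty := by
    obtain ⟨a⟩ := ‹Nonempty α›
    refine ⟨fun j => if j = a then 1 else 0, fun i => by positivity, ?_⟩
    rw [gfun, Finset.sum_eq_single_of_mem a (Finset.mem_univ a)]
    · simp
    · intro b _ hb
      simp [hb, zero_pow hk]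
  obtain ⟨y, hyK, hymax⟩ := hKcompact.exists_isMaxOn hKne (continuous_ffun k E).continuousOn
  refine ⟨y, ffun k E y, hyK.1, hyK.2, rfl, ?_⟩
  intro z hz
  rcases eq_or_lt_of_le (gfun_nonneg (k := k) hz) with hg0 | hgpos
  · -- gfun k z = 0, so z = 0
    have hz0 : ∀ i, z i = 0 := by
      intro i
      have h1 : z i ^ k = 0 := by
        have h2 := Finset.single_le_sum (f := fun j => z j ^ k)
          (fun j _ => pow_nonneg (hz j) k) (Finset.mem_univ i)
        have h3 : z i ^ k ≤ gfun k z := h2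
        rw [← hg0] at h3
        exact le_antisymm h3 (pow_nonneg (hz i) k)
      exact pow_eq_zero_iff hk |>.mp h1
    have hfz : ffun k E z = 0 := by
      rw [ffun]
      have h1 : ∀ i : α, (hdeg E i : ℝ) * z i ^ k = 0 := by
        intro i; rw [hz0 i, zero_pow hk, mul_zero]
      have h2 : ∀ e ∈ E, ∏ j ∈ e, z j = 0 := by
        intro e he
        have hne : e.Nonempty := Finset.card_pos.mp (by rw [hunif e he]; omega)
        obtain ⟨j, hj⟩ := hne
        exact Finset.prod_eq_zero hj (hz0 j)
      rw [Finset.sum_congr rfl (fun i _ => h1 i), Finset.sum_congr rfl h2]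
      simp
    rw [hfz, ← hg0, mul_zero]
  · set c : ℝ := (gfun k z) ^ ((k : ℝ)⁻¹) with hc
    have hcpos : 0 < c := Real.rpow_pos_of_pos hgpos _
    have hck : c ^ k = gfun k z := Real.rpow_inv_natCast_pow hgpos.le hk
    have hwK : (fun i => c⁻¹ * z i) ∈ K := by
      constructor
      · intro i
        exact mul_nonneg (inv_nonneg.mpr hcpos.le) (hz i)
      · rw [gfun_smul, inv_pow, hck, inv_mul_cancel₀ hgpos.ne']
    have h4 := hymax hwK
    rw [Set.mem_setOf_eq, ffun_smul E hunif, inv_pow, hck] at h4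
    calc ffun k E z = gfun k z * ((gfun k z)⁻¹ * ffun k E z) := by
          field_simp
      _ ≤ gfun k z * ffun k E y := by
          exact mul_le_mul_of_nonneg_left h4 hgpos.le
      _ = ffun k E y * gfun k z := mul_comm _ _

lemma sum_mul_signAct {k : ℕ} (hk : 1 ≤ k) (E : Finset (Finset α))
    (hunif : ∀ e ∈ E, e.card = k) (y : α → ℝ) :
    ∑ i, y i * signAct k E y i = ffun k E y := by
  have hyy : ∀ i : α, y i * y i ^ (k - 1) = y i ^ k := by
    intro i
    rw [← pow_succ', Nat.sub_add_cancel hk]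
  have h1 : ∀ i : α, y i * signAct k E y i
      = (hdeg E i : ℝ) * y i ^ k + ∑ e ∈ E, (if i ∈ e then ∏ j ∈ e, y j else 0) := by
    intro i
    rw [signAct, mul_add, mul_left_comm, hyy, ← Finset.sum_filter]
    congr 1
    rw [Finset.mul_sum]
    refine Finset.sum_congr rfl fun e he => ?_
    rw [Finset.mul_prod_erase _ _ (Finset.mem_filter.mp he).2]
  rw [ffun]
  simp only [h1, Finset.sum_add_distrib]
  congr 1
  rw [Finset.sum_comm, Finset.mul_sum]
  refine Finset.sum_congr rfl fun e he => ?_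
  rw [Finset.sum_ite_mem, Finset.univ_inter, Finset.sum_const, nsmul_eq_mul, hunif e he]


lemma gfun_update {k : ℕ} (y : α → ℝ) (i : α) (s : ℝ) :
    gfun k (Function.update y i s) = gfun k y + (s ^ k - y i ^ k) := by
  have h : ∀ j : α, (Function.update y i s j) ^ k = Function.update (fun j => y j ^ k) i (s ^ k) j := by
    intro j
    by_cases hj : j = i
    · subst hj; simp
    · simp [Function.update_of_ne hj]
  rw [gfun, Finset.sum_congr rfl (fun j _ => h j),
    Finset.sum_update_of_mem (Finset.mem_univ i)]
  rw [gfun, ← Finset.sum_erase_add _ _ (Finset.mem_univ i), Finset.sdiff_singleton_eq_erase]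
  ring

lemma ffun_update {k : ℕ} (E : Finset (Finset α)) (y : α → ℝ) (i : α) (s : ℝ) :
    ffun k E (Function.update y i s)
      = ffun k E y + (hdeg E i : ℝ) * (s ^ k - y i ^ k) + k * ((s - y i) * adjAct E y i) := by
  have h1 : ∀ j : α, (hdeg E j : ℝ) * (Function.update y i s j) ^ k
      = Function.update (fun j => (hdeg E j : ℝ) * y j ^ k) i ((hdeg E i : ℝ) * s ^ k) j := by
    intro j
    by_cases hj : j = i
    · subst hj; simp
    · simp [Function.update_of_ne hj]
  have h2 : ∀ e ∈ E, ∏ j ∈ e, Function.update y i s j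
      = if i ∈ e then s * ∏ j ∈ e.erase i, y j else ∏ j ∈ e, y j := by
    intro e _
    by_cases hie : i ∈ e
    · rw [if_pos hie, ← Finset.mul_prod_erase _ _ hie, Function.update_self]
      congr 1
      exact Finset.prod_congr rfl fun j hj =>
        Function.update_of_ne (Finset.ne_of_mem_erase hj) _ _
    · rw [if_neg hie]
      exact Finset.prod_congr rfl fun j hj =>
        Function.update_of_ne (by rintro rfl; exact hie hj) _ _
  rw [ffun, Finset.sum_congr rfl (fun j _ => h1 j),
    Finset.sum_update_of_mem (Finset.mem_univ i),
    Finset.sum_congr rfl h2]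
  rw [ffun, ← Finset.sum_erase_add _ (fun j => (hdeg E j : ℝ) * y j ^ k) (Finset.mem_univ i),
    Finset.sdiff_singleton_eq_erase]
  have h3 : ∑ e ∈ E, (if i ∈ e then s * ∏ j ∈ e.erase i, y j else ∏ j ∈ e, y j)
      = ∑ e ∈ E, ∏ j ∈ e, y j + (s - y i) * adjAct E y i := by
    have h4 : ∀ e ∈ E, (if i ∈ e then s * ∏ j ∈ e.erase i, y j else ∏ j ∈ e, y j)
        = ∏ j ∈ e, y j + (if i ∈ e then (s - y i) * ∏ j ∈ e.erase i, y j else 0) := by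
      intro e _
      by_cases hie : i ∈ e
      · rw [if_pos hie, if_pos hie, ← Finset.mul_prod_erase _ y hie]; ring
      · rw [if_neg hie, if_neg hie]; ring
    rw [Finset.sum_congr rfl h4, Finset.sum_add_distrib]
    congr 1
    rw [adjAct, Finset.mul_sum, ← Finset.sum_filter]
  rw [h3]
  ring

lemma maximizer_eigen {k : ℕ} (hk : 2 ≤ k) (E : Finset (Finset α)) (y : α → ℝ) (lam : ℝ)
    (hy0 : ∀ i, 0 ≤ y i) (hg : gfun k y = 1) (hf : ffun k E y = lam)
    (hmax : ∀ z : α → ℝ, (∀ i, 0 ≤ z i) → ffun k E z ≤ lam * gfun k z) (i : α) :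
    signAct k E y i = lam * y i ^ (k - 1) := by
  classical
  set d : ℝ := (hdeg E i : ℝ) with hd
  set B : ℝ := adjAct E y i with hB
  set ψ : ℝ → ℝ := fun s => (d - lam) * (s ^ k - y i ^ k) + (k : ℝ) * ((s - y i) * B) with hψ
  have hψval : ∀ s : ℝ, ψ s = ffun k E (Function.update y i s)
      - lam * gfun k (Function.update y i s) := by
    intro s
    rw [ffun_update, gfun_update, hf, hg]
    simp only [hψ]
    ring
  have hψle : ∀ s : ℝ, 0 ≤ s → ψ s ≤ 0 := by
    intro s hs
    rw [hψval s]
    have hz : ∀ j, 0 ≤ Function.update y i s j := by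
      intro j
      by_cases hj : j = i
      · subst hj; rwa [Function.update_self]
      · rw [Function.update_of_ne hj]; exact hy0 j
    linarith [hmax _ hz]
  have hψ0 : ψ (y i) = 0 := by simp [hψ]
  rcases (hy0 i).lt_or_eq with hpos | hzero
  · -- interior case
    have hloc : IsLocalMax ψ (y i) := by
      filter_upwards [eventually_gt_nhds hpos] with s hs
      rw [hψ0]
      exact hψle s hs.le
    have hder : HasDerivAt ψ ((d - lam) * ((k : ℝ) * y i ^ (k - 1)) + (k : ℝ) * B) (y i) := by
      have h1 : HasDerivAt (fun s : ℝ => s ^ k) ((k : ℝ) * y i ^ (k - 1)) (y i) :=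
        hasDerivAt_pow k (y i)
      have h2 : HasDerivAt (fun s : ℝ => (d - lam) * (s ^ k - y i ^ k))
          ((d - lam) * ((k : ℝ) * y i ^ (k - 1))) (y i) :=
        ((h1.sub_const (y i ^ k)).const_mul (d - lam))
      have h3 : HasDerivAt (fun s : ℝ => (k : ℝ) * ((s - y i) * B)) ((k : ℝ) * B) (y i) := by
        have h4 : HasDerivAt (fun s : ℝ => (s - y i) * B) B (y i) := by
          simpa using ((hasDerivAt_id (y i)).sub_const (y i)).mul_const B
        simpa using h4.const_mul (k : ℝ)
      exact h2.add h3
    have hzero' : (d - lam) * ((k : ℝ) * y i ^ (k - 1)) + (k : ℝ) * B = 0 := by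
      rw [← hder.deriv]
      exact hloc.deriv_eq_zero
    have hkpos : (0 : ℝ) < (k : ℝ) := by positivity
    rw [signAct_eq, ← hd, ← hB]
    have : (k : ℝ) * ((d - lam) * y i ^ (k - 1) + B) = 0 := by linarith [hzero']
    have h5 : (d - lam) * y i ^ (k - 1) + B = 0 := by
      rcases mul_eq_zero.mp this with h | h
      · exact absurd h hkpos.ne'
      · exact h
    linarith [h5]
  · -- boundary case
    have hB0 : 0 ≤ B := adjAct_nonneg hy0 i
    have hBle : B ≤ 0 := by
      have hk0 : (0:ℝ) < k := by positivity
      have key : ∀ s : ℝ, 0 < s → (k : ℝ) * B ≤ (lam - d) * s ^ (k - 1) := by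
        intro s hs
        have h1 := hψle s hs.le
        rw [hψ, ← hzero] at h1
        simp only [zero_pow (by omega : k ≠ 0)] at h1
        have h3 : s ^ k = s * s ^ (k - 1) := by
          rw [← pow_succ', Nat.sub_add_cancel (by omega)]
        by_contra hcon
        push_neg at hcon
        have h5 : 0 < s * ((d - lam) * s ^ (k - 1) + (k : ℝ) * B) := by
          apply mul_pos hs
          linarith
        have h6 : s * ((d - lam) * s ^ (k - 1) + (k : ℝ) * B)
            = (d - lam) * (s ^ k - 0) + (k : ℝ) * ((s - 0) * B) := by rw [h3]; ring
        linarith [h1, h5]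
      have hlim : Filter.Tendsto (fun s : ℝ => (lam - d) * s ^ (k - 1)) (nhdsWithin 0 (Set.Ioi 0))
          (nhds 0) := by
        have hc : Continuous (fun s : ℝ => (lam - d) * s ^ (k - 1)) :=
          continuous_const.mul (continuous_pow _)
        have h0 : (lam - d) * (0:ℝ) ^ (k - 1) = 0 := by
          rw [zero_pow (by omega : k - 1 ≠ 0), mul_zero]
        have := hc.tendsto 0
        rw [h0] at this
        exact this.mono_left nhdsWithin_le_nhds
      have hnb : ((nhdsWithin (0:ℝ) (Set.Ioi 0)).NeBot) := nhdsGT_neBot 0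
      have hev : ∀ᶠ s in nhdsWithin (0:ℝ) (Set.Ioi 0), (k : ℝ) * B ≤ (lam - d) * s ^ (k - 1) := by
        filter_upwards [self_mem_nhdsWithin] with s hs
        exact key s hs
      have := ge_of_tendsto hlim hev
      nlinarith [this, hk0]
    have hBz : B = 0 := le_antisymm hBle hB0
    rw [signAct_eq, ← hd, ← hB, hBz, ← hzero, zero_pow (by omega : k - 1 ≠ 0)]
    ring

end Aux

set_option maxHeartbeats 1600000 in
/-- For `k` odd and a `k`-uniform connected nontrivial hypergraph with
Laplacian tensor `L` and signless Laplacian tensor `Q`, we have `λ(L) < λ(Q)`. -/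
theorem largest_lap_lt_largest_sign_odd {n k : ℕ} (hk : 3 ≤ k) (hkn : k ≤ n)
    (hkodd : Odd k) (E : Finset (Finset (Fin n))) (hunif : ∀ e ∈ E, e.card = k)
    (hconn : IsConnectedH E) (hnontriv : E ≠ ∅)
    (lamL lamQ : ℝ) (hL : IsLargestLapEig k E lamL) (hQ : IsLargestSignEig k E lamQ) :
    lamL < lamQ := by
  classical
  by_contra hcon
  push_neg at hcon
  have hk1 : 1 ≤ k := by omega
  have hk0 : k ≠ 0 := by omega
  have hn : 0 < n := by omega
  have hne : Nonempty (Fin n) := ⟨⟨0, hn⟩⟩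
  have hkeven : Even (k - 1) := by
    obtain ⟨a, ha⟩ := hkodd
    exact ⟨a, by omega⟩
  have hpow : ∀ t : ℝ, t * t ^ (k - 1) = t ^ k := fun t => by
    rw [← pow_succ', Nat.sub_add_cancel hk1]
  obtain ⟨⟨x, hxne, hxeig⟩, hLmax⟩ := hL
  obtain ⟨w, lamS, hw0, hwg, hwf, hwmax⟩ := exists_max hk0 E hunif
  have hweig : ∀ i, signAct k E w i = lamS * w i ^ (k - 1) :=
    maximizer_eigen (by omega) E w lamS hw0 hwg hwf hwmax
  have hwne : w ≠ 0 := by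
    intro h
    rw [h] at hwg
    simp only [gfun, Pi.zero_apply, zero_pow hk0, Finset.sum_const_zero] at hwg
    norm_num at hwg
  have hSQ : lamS ≤ lamQ := hQ.2 lamS ⟨w, hwne, hweig⟩
  -- the absolute-value vector
  set u0 : Fin n → ℝ := fun i => |x i| with hu0
  have hu00 : ∀ i, 0 ≤ u0 i := fun i => abs_nonneg _
  have hxabs : ∀ i, x i ^ (k - 1) = u0 i ^ (k - 1) := fun i => (hkeven.pow_abs (x i)).symm
  have hpt : ∀ i, lamL * u0 i ^ (k - 1) ≤ signAct k E u0 i := by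
    intro i
    have h1 := hxeig i
    rw [lapAct] at h1
    have h2 : |∑ e ∈ E.filter (fun e => i ∈ e), ∏ j ∈ e.erase i, x j|
        ≤ ∑ e ∈ E.filter (fun e => i ∈ e), ∏ j ∈ e.erase i, u0 j := by
      refine (Finset.abs_sum_le_sum_abs _ _).trans ?_
      refine Finset.sum_le_sum fun e _ => ?_
      rw [Finset.abs_prod]
    have h3 : -(∑ e ∈ E.filter (fun e => i ∈ e), ∏ j ∈ e.erase i, x j)
        ≤ ∑ e ∈ E.filter (fun e => i ∈ e), ∏ j ∈ e.erase i, u0 j :=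
      (neg_le_abs _).trans h2
    rw [signAct]
    have h4 : lamL * u0 i ^ (k - 1) = lamL * x i ^ (k - 1) := by rw [hxabs]
    rw [h4, ← h1, hxabs i]
    linarith
  have hfu0 : lamL * gfun k u0 ≤ ffun k E u0 := by
    rw [← sum_mul_signAct hk1 E hunif u0, gfun, Finset.mul_sum]
    refine Finset.sum_le_sum fun i _ => ?_
    have h5 := mul_le_mul_of_nonneg_left (hpt i) (hu00 i)
    calc lamL * u0 i ^ k = u0 i * (lamL * u0 i ^ (k - 1)) := by
          rw [mul_left_comm, hpow]
      _ ≤ u0 i * signAct k E u0 i := h5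
  have hgu0 : 0 < gfun k u0 := by
    have hxi : ∃ i, x i ≠ 0 := by
      by_contra h
      push_neg at h
      exact hxne (funext fun i => h i)
    obtain ⟨i, hi⟩ := hxi
    refine Finset.sum_pos' (fun j _ => pow_nonneg (hu00 j) k) ⟨i, Finset.mem_univ i, ?_⟩
    exact pow_pos (abs_pos.mpr hi) k
  have hLS : lamL ≤ lamS := by
    have h6 := hwmax u0 hu00
    have h7 : lamL * gfun k u0 ≤ lamS * gfun k u0 := le_trans hfu0 h6
    exact le_of_mul_le_mul_right (by linarith [h7]) hgu0
  have hSL : lamS = lamL := le_antisymm (hSQ.trans hcon) hLS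
  -- normalize u0
  set c : ℝ := (gfun k u0) ^ ((k : ℝ)⁻¹) with hc
  have hcpos : 0 < c := Real.rpow_pos_of_pos hgu0 _
  have hck : c ^ k = gfun k u0 := Real.rpow_inv_natCast_pow hgu0.le hk0
  set u : Fin n → ℝ := fun i => c⁻¹ * u0 i with hu
  have hu0' : ∀ i, 0 ≤ u i := fun i => mul_nonneg (inv_nonneg.mpr hcpos.le) (hu00 i)
  have hug : gfun k u = 1 := by
    rw [hu, gfun_smul, inv_pow, hck, inv_mul_cancel₀ hgu0.ne']
  have humax : ∀ z : Fin n → ℝ, (∀ i, 0 ≤ z i) → ffun k E z ≤ lamL * gfun k z := by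
    intro z hz
    have := hwmax z hz
    rwa [hSL] at this
  have huf : ffun k E u = lamL := by
    have h8 : ffun k E u = (c⁻¹) ^ k * ffun k E u0 := ffun_smul E hunif c⁻¹ u0
    have h9 : ffun k E u ≤ lamL := by
      have := humax u hu0'
      rwa [hug, mul_one] at this
    have h10 : lamL ≤ ffun k E u := by
      rw [h8]
      have h11 : (c⁻¹) ^ k * (lamL * gfun k u0) ≤ (c⁻¹) ^ k * ffun k E u0 :=
        mul_le_mul_of_nonneg_left hfu0 (by positivity)
      have h12 : (c⁻¹) ^ k * (lamL * gfun k u0) = lamL := by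
        rw [inv_pow, hck]
        field_simp
      linarith
    linarith
  -- positivity of u
  have hupos : ∀ i, 0 < u i := by
    by_contra hcon2
    push_neg at hcon2
    obtain ⟨i0, hi0⟩ := hcon2
    have hi0z : u i0 = 0 := le_antisymm hi0 (hu0' i0)
    have hj0 : ∃ j, u j ≠ 0 := by
      by_contra h
      push_neg at h
      rw [gfun] at hug
      have : ∀ j : Fin n, u j ^ k = 0 := fun j => by rw [h j, zero_pow hk0]
      rw [Finset.sum_congr rfl (fun j _ => this j)] at hug
      simp at hug
    obtain ⟨j0, hj0⟩ := hj0
    have hij : i0 ≠ j0 := fun h => hj0 (h ▸ hi0z)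
    have hchain := hconn i0 j0 hij
    have hmix : ∃ e ∈ E, (∃ v ∈ e, u v = 0) ∧ ∃ w' ∈ e, u w' ≠ 0 := by
      have H : ∀ b : Fin n, Relation.TransGen (fun a b : Fin n => ∃ e ∈ E, a ∈ e ∧ b ∈ e) i0 b →
          u b ≠ 0 → ∃ e ∈ E, (∃ v ∈ e, u v = 0) ∧ ∃ w' ∈ e, u w' ≠ 0 := by
        intro b hb
        induction hb with
        | single h =>
            intro hbne
            obtain ⟨e, he, hae, hbe⟩ := h
            exact ⟨e, he, ⟨i0, hae, hi0z⟩, _, hbe, hbne⟩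
        | @tail mid last hT hrel ih =>
            intro hbne
            obtain ⟨e, he, hce, hbe⟩ := hrel
            by_cases hcz : u mid = 0
            · exact ⟨e, he, ⟨mid, hce, hcz⟩, _, hbe, hbne⟩
            · exact ih hcz
      exact H j0 hchain hj0
    obtain ⟨e0, he0E, ⟨v0, hv0e, hv0z⟩, w0, hw0e, hw0nz⟩ := hmix
    set m : ℕ := (e0.filter (fun j => u j = 0)).card with hm
    have hm1 : 1 ≤ m := by
      rw [hm]
      refine Finset.card_pos.mpr ⟨v0, ?_⟩
      rw [Finset.mem_filter]
      exact ⟨hv0e, hv0z⟩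
    have hmk : m < k := by
      rw [hm, ← hunif e0 he0E]
      refine Finset.card_lt_card ?_
      rw [Finset.ssubset_iff_of_subset (Finset.filter_subset _ _)]
      refine ⟨w0, hw0e, ?_⟩
      rw [Finset.mem_filter]
      push_neg
      exact fun _ => hw0nz
    set P : ℝ := ∏ j ∈ e0.filter (fun j => ¬ u j = 0), u j with hP
    have hPpos : 0 < P := by
      rw [hP]
      refine Finset.prod_pos fun j hj => ?_
      rw [Finset.mem_filter] at hj
      exact lt_of_le_of_ne (hu0' j) (Ne.symm hj.2)
    have key : ∀ ε : ℝ, 0 < ε → ε ≤ 1 →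
        (k : ℝ) * P ≤ lamL * ((Finset.univ.filter (fun j => u j = 0)).card : ℝ) * ε ^ (k - m) := by
      intro ε hε hε1
      set yε : Fin n → ℝ := fun j => if u j = 0 then ε else u j with hyε
      have hyεj : ∀ j, yε j = if u j = 0 then ε else u j := fun j => rfl
      have hyε0 : ∀ j, 0 ≤ yε j := by
        intro j
        rw [hyεj]
        by_cases h : u j = 0
        · rw [if_pos h]; exact hε.le
        · rw [if_neg h]; exact hu0' j
      have hule : ∀ j, u j ≤ yε j := by
        intro j
        rw [hyεj]
        by_cases h : u j = 0
        · rw [if_pos h, h]; exact hε.le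
        · rw [if_neg h]
      have hgy : gfun k yε = 1 + ((Finset.univ.filter (fun j => u j = 0)).card : ℝ) * ε ^ k := by
        rw [gfun, ← Finset.sum_filter_add_sum_filter_not Finset.univ (fun j => u j = 0)]
        have hA : ∑ j ∈ Finset.univ.filter (fun j => u j = 0), yε j ^ k
            = ((Finset.univ.filter (fun j => u j = 0)).card : ℝ) * ε ^ k := by
          have hterm : ∀ j ∈ Finset.univ.filter (fun j => u j = 0), yε j ^ k = ε ^ k := by
            intro j hj
            rw [Finset.mem_filter] at hj
            rw [hyεj, if_pos hj.2]
          rw [Finset.sum_congr rfl hterm, Finset.sum_const, nsmul_eq_mul]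
        have hB : ∑ j ∈ Finset.univ.filter (fun j => ¬ u j = 0), yε j ^ k = 1 := by
          have hB1 : ∑ j ∈ Finset.univ.filter (fun j => ¬ u j = 0), yε j ^ k
              = ∑ j ∈ Finset.univ.filter (fun j => ¬ u j = 0), u j ^ k := by
            refine Finset.sum_congr rfl fun j hj => ?_
            rw [Finset.mem_filter] at hj
            rw [hyεj, if_neg hj.2]
          have hB2 : ∑ j ∈ Finset.univ.filter (fun j => u j = 0), u j ^ k = 0 := by
            refine Finset.sum_eq_zero fun j hj => ?_
            rw [Finset.mem_filter] at hj
            rw [hj.2, zero_pow hk0]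
          have hB3 := Finset.sum_filter_add_sum_filter_not Finset.univ
            (fun j => u j = 0) (fun j => u j ^ k)
          rw [hB1]
          have : gfun k u = 1 := hug
          rw [gfun] at this
          linarith [hB2, hB3, this]
        rw [hA, hB]
        ring
      have hprodD : ∏ j ∈ e0, yε j = ε ^ m * P := by
        rw [← Finset.prod_filter_mul_prod_filter_not e0 (fun j => u j = 0)]
        congr 1
        · have hterm : ∀ j ∈ e0.filter (fun j => u j = 0), yε j = ε := by
            intro j hj
            rw [Finset.mem_filter] at hj
            rw [hyεj, if_pos hj.2]
          rw [Finset.prod_congr rfl hterm, Finset.prod_const, hm]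
        · rw [hP]
          refine Finset.prod_congr rfl fun j hj => ?_
          rw [Finset.mem_filter] at hj
          rw [hyεj, if_neg hj.2]
      have hprodC : ∏ j ∈ e0, u j = 0 := Finset.prod_eq_zero hv0e hv0z
      have hfy : lamL + (k : ℝ) * (ε ^ m * P) ≤ ffun k E yε := by
        rw [← huf, ffun, ffun]
        have hA2 : ∑ i, (hdeg E i : ℝ) * u i ^ k ≤ ∑ i, (hdeg E i : ℝ) * yε i ^ k := by
          refine Finset.sum_le_sum fun i _ => ?_
          refine mul_le_mul_of_nonneg_left ?_ (Nat.cast_nonneg _)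
          exact pow_le_pow_left₀ (hu0' i) (hule i) k
        have hB2 : ∑ e ∈ E.erase e0, ∏ j ∈ e, u j ≤ ∑ e ∈ E.erase e0, ∏ j ∈ e, yε j := by
          refine Finset.sum_le_sum fun e _ => ?_
          exact Finset.prod_le_prod (fun j _ => hu0' j) (fun j _ => hule j)
        have hC2 : ∑ e ∈ E, ∏ j ∈ e, u j
            = ∑ e ∈ E.erase e0, ∏ j ∈ e, u j := by
          rw [← Finset.sum_erase_add E _ he0E, hprodC, add_zero]
        have hD2 : ∑ e ∈ E, ∏ j ∈ e, yε j
            = ∑ e ∈ E.erase e0, ∏ j ∈ e, yε j + ε ^ m * P := by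
          rw [← Finset.sum_erase_add E _ he0E, hprodD]
        rw [hC2, hD2]
        have hkR : (0:ℝ) ≤ (k:ℝ) := Nat.cast_nonneg k
        have hB3 := mul_le_mul_of_nonneg_left hB2 hkR
        have hexp : (k:ℝ) * (∑ e ∈ E.erase e0, ∏ j ∈ e, yε j + ε ^ m * P)
            = (k:ℝ) * ∑ e ∈ E.erase e0, ∏ j ∈ e, yε j + (k:ℝ) * (ε ^ m * P) := by ring
        linarith [hA2, hB3, hexp.le, hexp.ge]
      have hfyle := humax yε hyε0
      rw [hgy] at hfyle
      have hstep : (k : ℝ) * (ε ^ m * P) ≤ lamL * (((Finset.univ.filter (fun j => u j = 0)).card : ℝ) * ε ^ k) := by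
        have hexp2 : lamL * (1 + ((Finset.univ.filter (fun j => u j = 0)).card : ℝ) * ε ^ k)
            = lamL + lamL * (((Finset.univ.filter (fun j => u j = 0)).card : ℝ) * ε ^ k) := by
          ring
        linarith [hfy, hfyle, hexp2.le, hexp2.ge]
      have hεm : 0 < ε ^ m := pow_pos hε m
      have hsplit : ε ^ k = ε ^ m * ε ^ (k - m) := by
        rw [← pow_add]
        congr 1
        omega
      rw [hsplit] at hstep
      have hstep2 : ((k : ℝ) * P) * ε ^ m ≤ (lamL * ((Finset.univ.filter (fun j => u j = 0)).card : ℝ) * ε ^ (k - m)) * ε ^ m := by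
        calc ((k : ℝ) * P) * ε ^ m = (k : ℝ) * (ε ^ m * P) := by ring
          _ ≤ lamL * (((Finset.univ.filter (fun j => u j = 0)).card : ℝ) * (ε ^ m * ε ^ (k - m))) := hstep
          _ = (lamL * ((Finset.univ.filter (fun j => u j = 0)).card : ℝ) * ε ^ (k - m)) * ε ^ m := by ring
      exact le_of_mul_le_mul_right hstep2 hεm
    -- take the limit ε → 0⁺
    have hlim : Filter.Tendsto (fun ε : ℝ => lamL * ((Finset.univ.filter (fun j => u j = 0)).card : ℝ) * ε ^ (k - m))
        (nhdsWithin 0 (Set.Ioi 0)) (nhds 0) := by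
      have hcont : Continuous (fun ε : ℝ => lamL * ((Finset.univ.filter (fun j => u j = 0)).card : ℝ) * ε ^ (k - m)) :=
        continuous_const.mul (continuous_pow _)
      have h0 : lamL * ((Finset.univ.filter (fun j => u j = 0)).card : ℝ) * (0:ℝ) ^ (k - m) = 0 := by
        rw [zero_pow (by omega : k - m ≠ 0), mul_zero]
      have := hcont.tendsto 0
      rw [h0] at this
      exact this.mono_left nhdsWithin_le_nhds
    have hev : ∀ᶠ ε in nhdsWithin (0:ℝ) (Set.Ioi 0),
        (k : ℝ) * P ≤ lamL * ((Finset.univ.filter (fun j => u j = 0)).card : ℝ) * ε ^ (k - m) := by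
      have h1 : Set.Ioc (0:ℝ) 1 ∈ nhdsWithin (0:ℝ) (Set.Ioi 0) :=
        Ioc_mem_nhdsGT_of_mem (by norm_num : (0:ℝ) ∈ Set.Ico (0:ℝ) 1)
      filter_upwards [h1] with ε hε
      exact key ε hε.1 hε.2
    have hfin : (k : ℝ) * P ≤ 0 := ge_of_tendsto hlim hev
    have : (0:ℝ) < (k : ℝ) * P := by positivity
    linarith
  -- eigen equations for u at all coordinates
  have hueig : ∀ i, signAct k E u i = lamL * u i ^ (k - 1) :=
    maximizer_eigen (by omega) E u lamL hu0' hug huf humax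
  have hxnz : ∀ i, x i ≠ 0 := by
    intro i hxi
    have h0 : u i = 0 := by
      show c⁻¹ * u0 i = 0
      have : u0 i = 0 := by rw [hu0]; simp only; rw [hxi, abs_zero]
      rw [this, mul_zero]
    exact (hupos i).ne' h0
  -- sign equations on each edge
  have hsign : ∀ i : Fin n, ∀ e ∈ E.filter (fun e => i ∈ e),
      ∏ j ∈ e.erase i, x j = -∏ j ∈ e.erase i, u0 j := by
    intro i
    have h1 := hueig i
    rw [signAct] at h1
    have hscale : ∀ e ∈ E.filter (fun e => i ∈ e),
        ∏ j ∈ e.erase i, u j = (c⁻¹) ^ (k - 1) * ∏ j ∈ e.erase i, u0 j := by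
      intro e he
      rw [Finset.mem_filter] at he
      have hcard : (e.erase i).card = k - 1 := by
        rw [Finset.card_erase_of_mem he.2, hunif e he.1]
      have hterm : ∀ j ∈ e.erase i, u j = c⁻¹ * u0 j := fun j _ => rfl
      rw [Finset.prod_congr rfl hterm, Finset.prod_mul_distrib, Finset.prod_const, hcard]
    have hui : u i ^ (k - 1) = (c⁻¹) ^ (k - 1) * u0 i ^ (k - 1) := by
      show (c⁻¹ * u0 i) ^ (k - 1) = _
      rw [mul_pow]
    rw [Finset.sum_congr rfl hscale, hui] at h1
    have hcinv : (0:ℝ) < (c⁻¹) ^ (k - 1) := by positivity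
    have h2 : (hdeg E i : ℝ) * u0 i ^ (k - 1)
        + ∑ e ∈ E.filter (fun e => i ∈ e), ∏ j ∈ e.erase i, u0 j
        = lamL * u0 i ^ (k - 1) := by
      apply mul_left_cancel₀ hcinv.ne'
      rw [← Finset.mul_sum] at h1
      calc (c⁻¹) ^ (k - 1) * ((hdeg E i : ℝ) * u0 i ^ (k - 1)
            + ∑ e ∈ E.filter (fun e => i ∈ e), ∏ j ∈ e.erase i, u0 j)
          = (hdeg E i : ℝ) * ((c⁻¹) ^ (k - 1) * u0 i ^ (k - 1))
            + (c⁻¹) ^ (k - 1) * ∑ e ∈ E.filter (fun e => i ∈ e), ∏ j ∈ e.erase i, u0 j := by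
            ring
        _ = lamL * ((c⁻¹) ^ (k - 1) * u0 i ^ (k - 1)) := h1
        _ = (c⁻¹) ^ (k - 1) * (lamL * u0 i ^ (k - 1)) := by ring
    have hL1 := hxeig i
    rw [lapAct, hxabs i] at hL1
    have hsum0 : ∑ e ∈ E.filter (fun e => i ∈ e),
        (∏ j ∈ e.erase i, u0 j + ∏ j ∈ e.erase i, x j) = 0 := by
      rw [Finset.sum_add_distrib]
      linarith [h2, hL1]
    have hterm : ∀ e ∈ E.filter (fun e => i ∈ e),
        0 ≤ ∏ j ∈ e.erase i, u0 j + ∏ j ∈ e.erase i, x j := by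
      intro e _
      have habs : ∏ j ∈ e.erase i, u0 j = |∏ j ∈ e.erase i, x j| :=
        (Finset.abs_prod _ _).symm
      rw [habs]
      linarith [neg_abs_le (∏ j ∈ e.erase i, x j)]
    have hzero := (Finset.sum_eq_zero_iff_of_nonneg hterm).mp hsum0
    intro e he
    have := hzero e he
    linarith [this]
  -- final sign contradiction on some edge
  obtain ⟨e, heE⟩ := Finset.nonempty_iff_ne_empty.mpr hnontriv
  have hprodabs : ∀ i ∈ e, 0 < ∏ j ∈ e.erase i, u0 j := by
    intro i _
    exact Finset.prod_pos fun j _ => abs_pos.mpr (hxnz j)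
  have hneg : ∀ i ∈ e, ∏ j ∈ e.erase i, x j < 0 := by
    intro i hi
    have := hsign i e (Finset.mem_filter.mpr ⟨heE, hi⟩)
    rw [this]
    linarith [hprodabs i hi]
  have hπne : ∏ j ∈ e, x j ≠ 0 := Finset.prod_ne_zero_iff.mpr fun j _ => hxnz j
  have hπ : ∀ i ∈ e, ∏ j ∈ e, x j = x i * ∏ j ∈ e.erase i, x j :=
    fun i hi => (Finset.mul_prod_erase e x hi).symm
  rcases hπne.lt_or_gt with hπneg | hπpos
  · have hxpos : ∀ i ∈ e, 0 < x i := by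
      intro i hi
      by_contra h
      push_neg at h
      have h1 : 0 ≤ x i * ∏ j ∈ e.erase i, x j := by
        nlinarith [h, hneg i hi]
      rw [← hπ i hi] at h1
      linarith
    have : 0 < ∏ j ∈ e, x j := Finset.prod_pos hxpos
    linarith
  · have hxneg : ∀ i ∈ e, x i < 0 := by
      intro i hi
      by_contra h
      push_neg at h
      have h1 : x i * ∏ j ∈ e.erase i, x j ≤ 0 := by
        nlinarith [h, hneg i hi]
      rw [← hπ i hi] at h1
      linarith
    have hform : ∏ j ∈ e, x j = (-1 : ℝ) ^ e.card * ∏ j ∈ e, u0 j := by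
      have h1 : ∀ j ∈ e, x j = (-1) * u0 j := by
        intro j hj
        have : u0 j = |x j| := rfl
        rw [this, abs_of_neg (hxneg j hj)]
        ring
      rw [Finset.prod_congr rfl h1, Finset.prod_mul_distrib, Finset.prod_const]
    have h2 : ((-1 : ℝ)) ^ e.card = -1 := by
      rw [hunif e heE]
      exact hkodd.neg_one_pow
    have h3 : 0 < ∏ j ∈ e, u0 j := Finset.prod_pos fun j _ => abs_pos.mpr (hxnz j)
    have : ∏ j ∈ e, x j < 0 := by
      rw [hform, h2]
      linarith
    linarith
end

section
/- Let k be even and let G=(V,E) be a k-uniform hyperstar of size d>0 with Laplacian tensor L. Then λ(L) > d. -/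
open Finset

variable {α : Type*} [DecidableEq α]

/-- For `k` even and a `k`-uniform hyperstar of size `d > 0` with Laplacian
tensor `L`, we have `λ(L) > d`. -/
theorem largest_lap_eig_hyperstar_gt_deg {n k d : ℕ} (hk : 3 ≤ k) (hkn : k ≤ n)
    (hkeven : Even k) (hd : 0 < d) (E : Finset (Finset (Fin n)))
    (hstar : IsHyperstar k d E) (lam : ℝ) (hlam : IsLargestLapEig k E lam) :
    (d : ℝ) < lam := by
  obtain ⟨h, P, hhP, hcard, hdisj, hcover, hE⟩ := hstar
  have hk1 : 1 ≤ k - 1 := by omega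
  have hodd : Odd (k - 1) := Nat.Even.sub_odd (by omega) hkeven odd_one
  have hd1 : (1:ℝ) ≤ (d:ℝ) := by exact_mod_cast hd
  set i₀ : Fin d := ⟨0, hd⟩ with hi₀
  -- find the parameter a
  set f : ℝ → ℝ := fun a => ((d:ℝ) - 1 + a) * a ^ (k-1) with hf
  have hcont : Continuous f := by fun_prop
  have hf0 : f (1 - (d:ℝ)) = 0 := by simp [hf]
  have hf1 : (1:ℝ) ≤ f (1 - (d:ℝ) - 1) := by
    have : (1:ℝ) - (d:ℝ) - 1 = -(d:ℝ) := by ring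
    rw [hf]
    simp only [this, hodd.neg_pow]
    have hpow : (1:ℝ) ≤ (d:ℝ) ^ (k-1) := one_le_pow₀ hd1
    nlinarith
  obtain ⟨a, haIcc, ha⟩ : ∃ a ∈ Set.Icc (1 - (d:ℝ) - 1) (1 - (d:ℝ)), f a = 1 := by
    have hsub := intermediate_value_Icc' (by linarith : (1:ℝ) - (d:ℝ) - 1 ≤ 1 - (d:ℝ))
      hcont.continuousOn
    have : (1:ℝ) ∈ Set.Icc (f (1 - (d:ℝ))) (f (1 - (d:ℝ) - 1)) := by
      rw [hf0]; exact ⟨zero_le_one, hf1⟩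
    obtain ⟨a, ha1, ha2⟩ := hsub this
    exact ⟨a, ha1, ha2⟩
  have halt : a < 1 - (d:ℝ) := by
    rcases lt_or_eq_of_le haIcc.2 with h' | h'
    · exact h'
    · rw [h', hf0] at ha; norm_num at ha
  -- basic structural facts
  have hPne : ∀ i, ∃ w, w ∈ P i := by
    intro i
    have : 0 < (P i).card := by rw [hcard]; omega
    obtain ⟨w, hw⟩ := Finset.card_pos.mp this
    exact ⟨w, hw⟩
  have huniq : ∀ {v : Fin n} {i j : Fin d}, v ∈ P i → v ∈ P j → i = j := by
    intro v i j hvi hvj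
    by_contra hne
    exact Finset.disjoint_left.mp (hdisj i j hne) hvi hvj
  have hmemE : ∀ e ∈ E, ∃ i, e = insert h (P i) := by
    intro e he
    rw [hE] at he
    obtain ⟨i, _, hi⟩ := Finset.mem_image.mp he
    exact ⟨i, hi.symm⟩
  have hEmem : ∀ i, insert h (P i) ∈ E := by
    intro i; rw [hE]; exact Finset.mem_image.mpr ⟨i, Finset.mem_univ i, rfl⟩
  have hinj : Function.Injective (fun i : Fin d => insert h (P i)) := by
    intro i j hij
    obtain ⟨w, hw⟩ := hPne i
    have hwne : w ≠ h := fun hwh => hhP i (hwh ▸ hw)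
    have hij' : insert h (P i) = insert h (P j) := hij
    have : w ∈ insert h (P j) := hij' ▸ Finset.mem_insert_of_mem hw
    rcases Finset.mem_insert.mp this with h' | h'
    · exact absurd h' hwne
    · exact huniq hw h'
  -- the candidate eigenvector
  set x : Fin n → ℝ := fun v => if v = h then a else if v ∈ P i₀ then 1 else 0 with hx
  have hxh : x h = a := by simp [hx]
  have hxP0 : ∀ v ∈ P i₀, x v = 1 := by
    intro v hv
    have : v ≠ h := fun hvh => hhP i₀ (hvh ▸ hv)
    simp [hx, this, hv]
  have hxz : ∀ v, v ≠ h → v ∉ P i₀ → x v = 0 := by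
    intro v hv1 hv2; simp [hx, hv1, hv2]
  -- filter computations
  have hfilth : E.filter (fun e => h ∈ e) = E := by
    apply Finset.filter_true_of_mem
    intro e he
    obtain ⟨i, rfl⟩ := hmemE e he
    exact Finset.mem_insert_self _ _
  have hfiltv : ∀ (v : Fin n) (i : Fin d), v ≠ h → v ∈ P i →
      E.filter (fun e => v ∈ e) = {insert h (P i)} := by
    intro v i hvh hvi
    ext e
    simp only [Finset.mem_filter, Finset.mem_singleton]
    constructor
    · rintro ⟨he, hve⟩
      obtain ⟨j, rfl⟩ := hmemE e he
      rcases Finset.mem_insert.mp hve with h' | h'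
      · exact absurd h' hvh
      · rw [huniq hvi h']
    · rintro rfl
      exact ⟨hEmem i, Finset.mem_insert_of_mem hvi⟩
  have hdegh : hdeg E h = d := by
    rw [hdeg, hfilth, hE, Finset.card_image_of_injective _ hinj, Finset.card_univ,
      Fintype.card_fin]
  have hdegv : ∀ (v : Fin n) (i : Fin d), v ≠ h → v ∈ P i → hdeg E v = 1 := by
    intro v i hvh hvi
    rw [hdeg, hfiltv v i hvh hvi, Finset.card_singleton]
  -- eigen equations
  have heig : ∀ v, lapAct k E x v = (1 - a) * x v ^ (k - 1) := by
    intro v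
    by_cases hvh : v = h
    · subst hvh
      rw [lapAct, hfilth, hxh, hdegh, hE,
        Finset.sum_image (fun i _ j _ hij => hinj hij)]
      have hsum : ∑ i : Fin d, ∏ j ∈ (insert v (P i)).erase v, x j = 1 := by
        have hterm : ∀ i : Fin d, ∏ j ∈ (insert v (P i)).erase v, x j
            = if i = i₀ then 1 else 0 := by
          intro i
          rw [Finset.erase_insert (hhP i)]
          by_cases hii : i = i₀
          · subst hii
            simp only [if_pos rfl]
            exact Finset.prod_eq_one fun j hj => hxP0 j hj
          · simp only [if_neg hii]
            obtain ⟨w, hw⟩ := hPne i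
            refine Finset.prod_eq_zero hw ?_
            exact hxz w (fun hwh => hhP i (hwh ▸ hw))
              (fun hw0 => hii (huniq hw hw0))
        rw [Finset.sum_congr rfl fun i _ => hterm i, Finset.sum_ite_eq' Finset.univ i₀]
        simp
      rw [hsum]
      have ha' : ((d:ℝ) - 1 + a) * a ^ (k - 1) = 1 := ha
      push_cast
      linear_combination ha'
    · obtain ⟨i, hvi⟩ := hcover v hvh
      rw [lapAct, hfiltv v i hvh hvi, hdegv v i hvh hvi, Finset.sum_singleton]
      by_cases hii : i = i₀
      · subst hii
        have hprod : ∏ j ∈ (insert h (P i₀)).erase v, x j = a := by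
          rw [Finset.erase_insert_of_ne (Ne.symm hvh), Finset.prod_insert
            (fun hc => hhP i₀ (Finset.mem_of_mem_erase hc)), hxh]
          rw [Finset.prod_eq_one fun j hj => hxP0 j (Finset.mem_of_mem_erase hj), mul_one]
        rw [hprod, hxP0 v hvi, one_pow]
        ring
      · have hprod : ∏ j ∈ (insert h (P i)).erase v, x j = 0 := by
          have h2 : 1 < (P i).card := by rw [hcard]; omega
          obtain ⟨w, hw, hwv⟩ := Finset.exists_mem_ne h2 v
          refine Finset.prod_eq_zero (Finset.mem_erase.mpr
            ⟨hwv, Finset.mem_insert_of_mem hw⟩) ?_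
          exact hxz w (fun hwh => hhP i (hwh ▸ hw)) (fun hw0 => hii (huniq hw hw0))
        have hxv : x v = 0 := hxz v hvh (fun hv0 => hii (huniq hvi hv0))
        rw [hprod, hxv, zero_pow (by omega : k - 1 ≠ 0)]
        ring
  -- conclude
  have hxne : x ≠ 0 := by
    obtain ⟨w, hw⟩ := hPne i₀
    intro hc
    have : x w = 0 := by rw [hc]; rfl
    rw [hxP0 w hw] at this
    norm_num at this
  have hle : (1 - a) ≤ lam := hlam.2 (1 - a) ⟨x, hxne, heig⟩
  linarith
end

section
/- Let G=(V,E) be the 3-uniform complete hypergraph on n vertices with Laplacian tensor L, where n=2m for some positive integer m (and n≥3). Then λ(L) ≥ C(n−1,2)+m−1, which is strictly larger than the maximum degree d = C(n−1,2) of G. -/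
open Finset

variable {α : Type*} [DecidableEq α]

lemma sum_pc_one {α : Type*} [DecidableEq α] (t : Finset α) (x : α → ℝ) :
    ∑ s ∈ t.powersetCard 1, ∏ j ∈ s, x j = ∑ j ∈ t, x j := by
  rw [Finset.powersetCard_one, Finset.sum_map]
  simp

lemma sum_pc_two {α : Type*} [DecidableEq α] (t : Finset α) (x : α → ℝ) :
    2 * ∑ s ∈ t.powersetCard 2, ∏ j ∈ s, x j
      = (∑ j ∈ t, x j) ^ 2 - ∑ j ∈ t, (x j) ^ 2 := by
  induction t using Finset.induction_on with
  | empty =>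
    rw [show (∅ : Finset α).powersetCard 2 = ∅ from
      Finset.powersetCard_eq_empty.2 (by simp)]
    simp
  | insert a t ha ih =>
    have h2 : (insert a t).powersetCard 2
        = t.powersetCard 2 ∪ (t.powersetCard 1).image (insert a) :=
      Finset.powersetCard_succ_insert ha 1
    have hdisj : Disjoint (t.powersetCard 2) ((t.powersetCard 1).image (insert a)) := by
      rw [Finset.disjoint_left]
      rintro s hs hs'
      obtain ⟨u, hu, rfl⟩ := Finset.mem_image.1 hs'
      exact ha ((Finset.mem_powersetCard.1 hs).1 (Finset.mem_insert_self a u))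
    have himg : ∑ s ∈ (t.powersetCard 1).image (insert a), ∏ j ∈ s, x j
        = x a * ∑ j ∈ t, x j := by
      rw [Finset.sum_image (by
        intro u hu v hv huv
        have hau : a ∉ u := fun h => ha ((Finset.mem_powersetCard.1 hu).1 h)
        have hav : a ∉ v := fun h => ha ((Finset.mem_powersetCard.1 hv).1 h)
        rw [← Finset.erase_insert hau, huv, Finset.erase_insert hav])]
      rw [← sum_pc_one t x, Finset.mul_sum]
      refine Finset.sum_congr rfl fun u hu => ?_
      have hau : a ∉ u := fun h => ha ((Finset.mem_powersetCard.1 hu).1 h)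
      rw [Finset.prod_insert hau]
    rw [h2, Finset.sum_union hdisj, himg, Finset.sum_insert ha, Finset.sum_insert ha]
    linear_combination ih

lemma filter_mem_complete {n : ℕ} (i : Fin n) :
    ((Finset.univ.powersetCard 3 : Finset (Finset (Fin n))).filter (fun e => i ∈ e))
      = ((Finset.univ.erase i).powersetCard 2).image (insert i) := by
  ext e
  simp only [Finset.mem_filter, Finset.mem_powersetCard, Finset.mem_image]
  constructor
  · rintro ⟨⟨-, hcard⟩, hi⟩
    refine ⟨e.erase i, ⟨fun j hj => ?_, ?_⟩, Finset.insert_erase hi⟩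
    · exact Finset.mem_erase.2 ⟨(Finset.mem_erase.1 hj).1, Finset.mem_univ j⟩
    · rw [Finset.card_erase_of_mem hi, hcard]
  · rintro ⟨s, ⟨hsub, hcard⟩, rfl⟩
    have his : i ∉ s := fun h => (Finset.mem_erase.1 (hsub h)).1 rfl
    exact ⟨⟨Finset.subset_univ _,
      by rw [Finset.card_insert_of_notMem his, hcard]⟩, Finset.mem_insert_self _ _⟩

lemma insert_injOn {n : ℕ} (i : Fin n) :
    ∀ u ∈ (Finset.univ.erase i).powersetCard 2, ∀ v ∈ (Finset.univ.erase i).powersetCard 2,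
      insert i u = insert i v → u = v := by
  intro u hu v hv huv
  have hau : i ∉ u := fun h => (Finset.mem_erase.1 ((Finset.mem_powersetCard.1 hu).1 h)).1 rfl
  have hav : i ∉ v := fun h => (Finset.mem_erase.1 ((Finset.mem_powersetCard.1 hv).1 h)).1 rfl
  rw [← Finset.erase_insert hau, huv, Finset.erase_insert hav]

/-- For the `3`-uniform complete hypergraph on `n = 2m` vertices (`m ≥ 1`,
`n ≥ 3`) with Laplacian tensor `L`, the maximum degree is `d = C(n-1, 2)` and
`λ(L) ≥ C(n-1, 2) + m - 1 > C(n-1, 2)`. -/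
theorem largest_lap_eig_complete_three {n m : ℕ} (hm : 0 < m) (hn : n = 2 * m)
    (hn3 : 3 ≤ n) (E : Finset (Finset (Fin n)))
    (hE : E = Finset.univ.powersetCard 3)
    (lam : ℝ) (hlam : IsLargestLapEig 3 E lam) :
    (∀ i, hdeg E i = (n - 1).choose 2) ∧
    ((n - 1).choose 2 : ℝ) + (m : ℝ) - 1 ≤ lam ∧
    ((n - 1).choose 2 : ℝ) < ((n - 1).choose 2 : ℝ) + (m : ℝ) - 1 := by
  have hm2 : 2 ≤ m := by omega
  have hmn : m < n := by omega
  -- degrees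
  have hdegree : ∀ i : Fin n, hdeg E i = (n - 1).choose 2 := by
    intro i
    rw [hdeg, hE, filter_mem_complete i, Finset.card_image_of_injOn (insert_injOn i),
      Finset.card_powersetCard, Finset.card_erase_of_mem (Finset.mem_univ i),
      Finset.card_univ, Fintype.card_fin]
  refine ⟨hdegree, ?_, ?_⟩
  swap
  · have : (2 : ℝ) ≤ (m : ℝ) := by exact_mod_cast hm2
    linarith
  -- the eigenvector
  set x : Fin n → ℝ := fun j => if (j : ℕ) < m then 1 else -1 with hx
  have hxsq : ∀ j, x j ^ 2 = 1 := by
    intro j; by_cases h : (j : ℕ) < m <;> simp [hx, h]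
  have hcardlt : (Finset.univ.filter (fun j : Fin n => (j : ℕ) < m)).card = m := by
    have : (Finset.univ.filter (fun j : Fin n => (j : ℕ) < m))
        = Finset.Iio (⟨m, hmn⟩ : Fin n) := by
      ext j
      simp [Fin.lt_def]
    rw [this, Fin.card_Iio]
  have hsum0 : ∑ j : Fin n, x j = 0 := by
    rw [hx]
    rw [Finset.sum_ite, Finset.sum_const, Finset.sum_const, hcardlt]
    have : (Finset.univ.filter (fun j : Fin n => ¬ (j : ℕ) < m)).card = n - m := by
      have := Finset.card_filter_add_card_filter_not
        (s := (Finset.univ : Finset (Fin n))) (p := fun j : Fin n => (j : ℕ) < m)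
      rw [hcardlt, Finset.card_univ, Fintype.card_fin] at this
      omega
    rw [this]
    have hnm : n - m = m := by omega
    rw [hnm]
    simp
  have hsumsq : ∀ (t : Finset (Fin n)), ∑ j ∈ t, (x j) ^ 2 = t.card := by
    intro t
    rw [Finset.sum_congr rfl fun j _ => hxsq j, Finset.sum_const]
    simp
  -- eigen-equation
  have heig : IsLapEig 3 E ((((n - 1).choose 2 : ℝ)) + (m : ℝ) - 1) := by
    refine ⟨x, ?_, ?_⟩
    · intro h
      have h0 : x ⟨0, by omega⟩ = 0 := congrFun h _
      rw [hx] at h0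
      simp only [show ((⟨0, by omega⟩ : Fin n) : ℕ) < m from hm, if_pos] at h0
      norm_num at h0
    · intro i
      have hsum : ∑ e ∈ E.filter (fun e => i ∈ e), ∏ j ∈ e.erase i, x j
          = ∑ s ∈ ((Finset.univ.erase i).powersetCard 2), ∏ j ∈ s, x j := by
        rw [hE, filter_mem_complete i, Finset.sum_image (insert_injOn i)]
        refine Finset.sum_congr rfl fun s hs => ?_
        have his : i ∉ s := fun h =>
          (Finset.mem_erase.1 ((Finset.mem_powersetCard.1 hs).1 h)).1 rfl
        rw [Finset.erase_insert his]
      have hkey : 2 * ∑ s ∈ ((Finset.univ.erase i).powersetCard 2), ∏ j ∈ s, x j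
          = (x i) ^ 2 - ((n : ℝ) - 1) := by
        rw [sum_pc_two]
        have h1 : ∑ j ∈ Finset.univ.erase i, x j = - x i := by
          rw [Finset.sum_erase_eq_sub (Finset.mem_univ i), hsum0]; ring
        have h2 : ∑ j ∈ Finset.univ.erase i, (x j) ^ 2 = (n : ℝ) - 1 := by
          rw [hsumsq, Finset.card_erase_of_mem (Finset.mem_univ i), Finset.card_univ,
            Fintype.card_fin]
          have : 1 ≤ n := by omega
          push_cast [this]
          ring
        rw [h1, h2]; ring
      rw [lapAct, hdegree i, hsum]
      rw [hxsq i] at hkey ⊢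
      have hncast : (n : ℝ) = 2 * (m : ℝ) := by exact_mod_cast congrArg (Nat.cast (R := ℝ)) hn
      linarith
  exact hlam.2 _ heig
end

section
/- Let G=(V,E) be a k-uniform hypergraph with maximum degree d>0, adjacency tensor A and signless Laplacian tensor Q. Then max{d, (2·Σ_{i∈[n]} d_i)/n} ≤ λ(Q) ≤ λ(A) + d. -/
open Finset

variable {α : Type*} [DecidableEq α]

namespace LSE
variable {n : ℕ}

/-- Off-diagonal part of the tensor action at vertex `i`. -/
noncomputable def sA (E : Finset (Finset (Fin n))) (x : Fin n → ℝ) (i : Fin n) : ℝ :=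
  ∑ e ∈ E.filter (fun e => i ∈ e), ∏ j ∈ e.erase i, x j

/-- Rayleigh numerator `Σᵢ cᵢ xᵢᵏ + k Σₑ ∏ⱼ xⱼ`. -/
noncomputable def Ff (c : Fin n → ℝ) (k : ℕ) (E : Finset (Finset (Fin n))) (x : Fin n → ℝ) : ℝ :=
  (∑ i, c i * x i ^ k) + (k : ℝ) * ∑ e ∈ E, ∏ j ∈ e, x j

/-- Rayleigh denominator `Σᵢ xᵢᵏ`. -/
noncomputable def Nn (k : ℕ) (x : Fin n → ℝ) : ℝ := ∑ i, x i ^ k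

def Delta (n k : ℕ) : Set (Fin n → ℝ) := {x | (∀ i, 0 ≤ x i) ∧ Nn k x = 1}

lemma sA_nonneg (E : Finset (Finset (Fin n))) {x : Fin n → ℝ} (hx : ∀ i, 0 ≤ x i) (i : Fin n) :
    0 ≤ sA E x i :=
  Finset.sum_nonneg fun e _ => Finset.prod_nonneg fun j _ => hx j

lemma N_nonneg {k : ℕ} {y : Fin n → ℝ} (hy : ∀ i, 0 ≤ y i) : 0 ≤ Nn k y :=
  Finset.sum_nonneg fun i _ => pow_nonneg (hy i) k

lemma N_zero {k : ℕ} (hk : k ≠ 0) : Nn (n := n) k 0 = 0 := by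
  simp [Nn, zero_pow hk]

lemma F_eq (c : Fin n → ℝ) {k : ℕ} (hk : k ≠ 0) (E : Finset (Finset (Fin n)))
    (hunif : ∀ e ∈ E, e.card = k) (x : Fin n → ℝ) :
    Ff c k E x = ∑ i, x i * (c i * x i ^ (k-1) + sA E x i) := by
  have h1 : ∀ i : Fin n, x i * (c i * x i ^ (k-1) + sA E x i)
      = c i * x i ^ k + ∑ e ∈ E.filter (fun e => i ∈ e), x i * ∏ j ∈ e.erase i, x j := by
    intro i
    rw [mul_add, sA, Finset.mul_sum]
    congr 1
    rw [mul_comm (x i), mul_assoc, pow_sub_one_mul hk]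
  simp only [h1]
  rw [Finset.sum_add_distrib, Ff]
  congr 1
  have h2 : ∀ i : Fin n, ∑ e ∈ E.filter (fun e => i ∈ e), x i * ∏ j ∈ e.erase i, x j
      = ∑ e ∈ E, if i ∈ e then ∏ j ∈ e, x j else 0 := by
    intro i
    rw [Finset.sum_filter]
    apply Finset.sum_congr rfl
    intro e _
    split
    · next h => rw [Finset.mul_prod_erase e x h]
    · rfl
  simp only [h2]
  rw [Finset.sum_comm]
  rw [Finset.mul_sum]
  apply Finset.sum_congr rfl
  intro e he
  rw [Finset.sum_ite_mem, Finset.univ_inter, Finset.sum_const, hunif e he]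
  simp [mul_comm]

lemma N_update (k : ℕ) (x : Fin n → ℝ) (i : Fin n) (u : ℝ) :
    Nn k (Function.update x i u) = u ^ k + ∑ j ∈ Finset.univ.erase i, x j ^ k := by
  rw [Nn, ← Finset.add_sum_erase Finset.univ _ (Finset.mem_univ i), Function.update_self]
  congr 1
  apply Finset.sum_congr rfl
  intro j hj
  rw [Function.update_of_ne (Finset.ne_of_mem_erase hj)]

lemma F_update (c : Fin n → ℝ) (k : ℕ) (E : Finset (Finset (Fin n))) (x : Fin n → ℝ)
    (i : Fin n) (u : ℝ) :
    Ff c k E (Function.update x i u)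
      = c i * u ^ k + ((k : ℝ) * sA E x i) * u
        + ((∑ j ∈ Finset.univ.erase i, c j * x j ^ k)
           + (k : ℝ) * ∑ e ∈ E.filter (fun e => i ∉ e), ∏ j ∈ e, x j) := by
  rw [Ff]
  have h1 : ∑ j, c j * (Function.update x i u j) ^ k
      = c i * u ^ k + ∑ j ∈ Finset.univ.erase i, c j * x j ^ k := by
    rw [← Finset.add_sum_erase Finset.univ _ (Finset.mem_univ i), Function.update_self]
    congr 1
    apply Finset.sum_congr rfl
    intro j hj
    rw [Function.update_of_ne (Finset.ne_of_mem_erase hj)]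
  have h2 : ∑ e ∈ E, ∏ j ∈ e, Function.update x i u j
      = (sA E x i) * u + ∑ e ∈ E.filter (fun e => i ∉ e), ∏ j ∈ e, x j := by
    rw [← Finset.sum_filter_add_sum_filter_not E (fun e => i ∈ e)]
    congr 1
    · rw [sA, Finset.sum_mul]
      apply Finset.sum_congr rfl
      intro e he
      have hie : i ∈ e := (Finset.mem_filter.mp he).2
      rw [← Finset.mul_prod_erase e _ hie, Function.update_self, mul_comm]
      congr 1
      apply Finset.prod_congr rfl
      intro j hj
      rw [Function.update_of_ne (Finset.ne_of_mem_erase hj)]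
    · apply Finset.sum_congr rfl
      intro e he
      apply Finset.prod_congr rfl
      intro j hj
      have : j ≠ i := fun h => (Finset.mem_filter.mp he).2 (h ▸ hj)
      rw [Function.update_of_ne this]
  rw [h1, h2]
  ring

lemma F_smul (c : Fin n → ℝ) {k : ℕ} (E : Finset (Finset (Fin n)))
    (hunif : ∀ e ∈ E, e.card = k) (t : ℝ) (x : Fin n → ℝ) :
    Ff c k E (fun j => t * x j) = t ^ k * Ff c k E x := by
  rw [Ff, Ff, mul_add, Finset.mul_sum, Finset.mul_sum]
  congr 1
  · apply Finset.sum_congr rfl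
    intro j _
    rw [mul_pow]; ring
  · rw [← Finset.mul_sum, Finset.mul_sum, ← Finset.mul_sum]
    rw [mul_left_comm]
    congr 1
    rw [Finset.mul_sum]
    apply Finset.sum_congr rfl
    intro e he
    rw [Finset.prod_mul_distrib, Finset.prod_const, hunif e he]

lemma N_smul {k : ℕ} (t : ℝ) (x : Fin n → ℝ) :
    Nn (n := n) k (fun j => t * x j) = t ^ k * Nn k x := by
  rw [Nn, Nn, Finset.mul_sum]
  apply Finset.sum_congr rfl
  intro j _
  rw [mul_pow]

lemma continuous_F (c : Fin n → ℝ) (k : ℕ) (E : Finset (Finset (Fin n))) :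
    Continuous (Ff c k E) := by
  apply Continuous.add
  · exact continuous_finset_sum _ fun i _ => (continuous_const.mul ((continuous_apply i).pow k))
  · exact continuous_const.mul (continuous_finset_sum _ fun e _ =>
      continuous_finset_prod _ fun j _ => continuous_apply j)

lemma delta_compact {k : ℕ} (hk : k ≠ 0) : IsCompact (Delta n k) := by
  have hsub : Delta n k ⊆ Set.Icc (0 : Fin n → ℝ) 1 := by
    rintro x ⟨hx0, hx1⟩
    constructor
    · intro i; exact hx0 i
    · intro i
      show x i ≤ 1
      by_contra h
      push_neg at h
      have h1 : (1:ℝ) < x i ^ k := one_lt_pow₀ h hk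
      have h2 : x i ^ k ≤ Nn k x := by
        rw [Nn]
        exact Finset.single_le_sum (f := fun j => x j ^ k)
          (fun j _ => pow_nonneg (hx0 j) k) (Finset.mem_univ i)
      rw [hx1] at h2
      linarith
  have hclosed : IsClosed (Delta n k) := by
    have h1 : IsClosed {x : Fin n → ℝ | ∀ i, 0 ≤ x i} := by
      have : {x : Fin n → ℝ | ∀ i, 0 ≤ x i} = ⋂ i, {x | 0 ≤ x i} := by
        ext x; simp [Set.mem_iInter]
      rw [this]
      exact isClosed_iInter fun i => isClosed_le continuous_const (continuous_apply i)
    have h2 : IsClosed {x : Fin n → ℝ | Nn k x = 1} :=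
      isClosed_eq (continuous_finset_sum _ fun i _ => (continuous_apply i).pow k) continuous_const
    exact h1.inter h2
  exact IsCompact.of_isClosed_subset isCompact_Icc hclosed hsub

lemma delta_nonempty {k : ℕ} (hk : k ≠ 0) (hn : 0 < n) : (Delta n k).Nonempty := by
  obtain ⟨i0⟩ := Fin.pos_iff_nonempty.mp hn
  refine ⟨fun j => if j = i0 then 1 else 0, fun i => by positivity, ?_⟩
  rw [Nn]
  rw [Finset.sum_congr rfl (fun j _ => ?_), Finset.sum_ite_eq' Finset.univ i0 (fun _ => (1:ℝ))]
  · simp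
  · show (if j = i0 then (1:ℝ) else 0) ^ k = if j = i0 then 1 else 0
    split <;> simp [zero_pow hk]

lemma exists_max {k : ℕ} (hk : k ≠ 0) (hn : 0 < n) (c : Fin n → ℝ) (E : Finset (Finset (Fin n))) :
    ∃ x ∈ Delta n k, IsMaxOn (Ff c k E) (Delta n k) x :=
  (delta_compact hk).exists_isMaxOn (delta_nonempty hk hn) (continuous_F c k E).continuousOn

lemma homog_bound (c : Fin n → ℝ) {k : ℕ} (hk : k ≠ 0) (E : Finset (Finset (Fin n)))
    (hunif : ∀ e ∈ E, e.card = k) {x : Fin n → ℝ} (hx : x ∈ Delta n k)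
    (hmax : IsMaxOn (Ff c k E) (Delta n k) x)
    {y : Fin n → ℝ} (hy : ∀ i, 0 ≤ y i) :
    Ff c k E y ≤ Ff c k E x * Nn k y := by
  rcases eq_or_lt_of_le (N_nonneg hy) with h0 | hpos
  · -- N y = 0 ⇒ y = 0 ⇒ F y = 0
    have hy0 : ∀ i, y i = 0 := by
      intro i
      have h1 : y i ^ k ≤ Nn k y := Finset.single_le_sum (f := fun j => y j ^ k)
        (fun j _ => pow_nonneg (hy j) k) (Finset.mem_univ i)
      have h2 : (0:ℝ) ≤ y i ^ k := pow_nonneg (hy i) k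
      have : y i ^ k = 0 := le_antisymm (by rw [← h0] at h1; exact h1) h2
      exact pow_eq_zero_iff hk |>.mp this
    have hFy : Ff c k E y = 0 := by
      rw [Ff]
      have h1 : ∀ i : Fin n, c i * y i ^ k = 0 := by
        intro i; rw [hy0 i, zero_pow hk, mul_zero]
      have h2 : ∀ e ∈ E, ∏ j ∈ e, y j = 0 := by
        intro e he
        have hne : e.Nonempty := Finset.card_pos.mp (by rw [hunif e he]; omega)
        obtain ⟨j, hj⟩ := hne
        exact Finset.prod_eq_zero hj (hy0 j)
      rw [Finset.sum_congr rfl (fun i _ => h1 i), Finset.sum_congr rfl h2]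
      simp
    rw [hFy, ← h0, mul_zero]
  · -- scale into Delta
    set S := Nn k y with hS
    set t : ℝ := S ^ (k : ℝ)⁻¹ with ht
    have htpos : 0 < t := Real.rpow_pos_of_pos hpos _
    have htk : t ^ k = S := by
      rw [ht, ← Real.rpow_natCast (S ^ (k:ℝ)⁻¹) k, ← Real.rpow_mul (le_of_lt hpos),
        inv_mul_cancel₀ (by exact_mod_cast hk : (k:ℝ) ≠ 0), Real.rpow_one]
    set z : Fin n → ℝ := fun j => t⁻¹ * y j with hz
    have hzy : ∀ j, y j = t * z j := by
      intro j; rw [hz]; field_simp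
    have hzD : z ∈ Delta n k := by
      constructor
      · intro i; exact mul_nonneg (by positivity) (hy i)
      · rw [hz, N_smul, ← hS, inv_pow, htk, inv_mul_cancel₀ (ne_of_gt hpos)]
    have hFz : Ff c k E z ≤ Ff c k E x := hmax hzD
    have : Ff c k E y = t ^ k * Ff c k E z := by
      rw [show y = fun j => t * z j from funext hzy, F_smul c E hunif]
    rw [this, htk]
    calc S * Ff c k E z ≤ S * Ff c k E x := by
          apply mul_le_mul_of_nonneg_left hFz (le_of_lt hpos)
      _ = Ff c k E x * S := mul_comm _ _

lemma max_is_eig (c : Fin n → ℝ) {k : ℕ} (hk : 2 ≤ k) (E : Finset (Finset (Fin n)))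
    (hunif : ∀ e ∈ E, e.card = k) {x : Fin n → ℝ} (hx : x ∈ Delta n k)
    (hmax : IsMaxOn (Ff c k E) (Delta n k) x) (i : Fin n) :
    c i * x i ^ (k-1) + sA E x i = Ff c k E x * x i ^ (k-1) := by
  have hk0 : k ≠ 0 := by omega
  have hk1 : k - 1 ≠ 0 := by omega
  obtain ⟨hx0, hxN⟩ := hx
  set M := Ff c k E x with hM
  set s := sA E x i with hs
  set B := ((∑ j ∈ Finset.univ.erase i, c j * x j ^ k)
           + (k : ℝ) * ∑ e ∈ E.filter (fun e => i ∉ e), ∏ j ∈ e, x j)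
      - M * (∑ j ∈ Finset.univ.erase i, x j ^ k) with hB
  set ψ : ℝ → ℝ := fun u => (c i - M) * u ^ k + ((k : ℝ) * s) * u + B with hψ
  have key : ∀ u : ℝ, 0 ≤ u → ψ u ≤ 0 := by
    intro u hu
    have hyp : ∀ j, 0 ≤ Function.update x i u j := by
      intro j
      rcases eq_or_ne j i with h | h
      · subst h; rw [Function.update_self]; exact hu
      · rw [Function.update_of_ne h]; exact hx0 j
    have h1 := homog_bound c hk0 E hunif ⟨hx0, hxN⟩ hmax hyp
    rw [F_update, N_update] at h1
    rw [hψ]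
    simp only
    rw [hB]
    ring_nf
    ring_nf at h1
    linarith
  have hzero : ψ (x i) = 0 := by
    have h1 : Function.update x i (x i) = x := Function.update_eq_self i x
    have h2 := F_update c k E x i (x i)
    have h3 := N_update k x i (x i)
    rw [h1] at h2 h3
    rw [hψ]
    simp only
    rw [hB]
    have h4 : (x i)^k + ∑ j ∈ Finset.univ.erase i, x j ^ k = 1 := by rw [← h3, hxN]
    have h5 : c i * (x i) ^ k + ((k : ℝ) * s) * (x i)
        + ((∑ j ∈ Finset.univ.erase i, c j * x j ^ k)
           + (k : ℝ) * ∑ e ∈ E.filter (fun e => i ∉ e), ∏ j ∈ e, x j) = M := by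
      rw [← h2, hM]
    linear_combination h5 - M * h4
  rcases (hx0 i).lt_or_eq with hpos | hzero'
  · -- interior case
    have hloc : IsLocalMax ψ (x i) := by
      apply Filter.eventually_of_mem (Ioi_mem_nhds hpos)
      intro u hu
      rw [hzero]
      exact key u (le_of_lt (Set.mem_Ioi.mp hu))
    have hd1 : HasDerivAt (fun u : ℝ => u ^ k) ((k:ℝ) * (x i) ^ (k-1)) (x i) := by
      simpa using hasDerivAt_pow k (x i)
    have hd2 : HasDerivAt ψ ((c i - M) * ((k:ℝ) * (x i) ^ (k-1)) + ((k : ℝ) * s)) (x i) := by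
      rw [hψ]
      have h2 := (hd1.const_mul (c i - M)).add
        (((hasDerivAt_id (x i)).const_mul ((k:ℝ) * s)).add_const B)
      simpa [mul_one, add_assoc, Pi.add_def] using h2
    have hder0 := hloc.hasDerivAt_eq_zero hd2
    have hkpos : (0:ℝ) < (k:ℝ) := by exact_mod_cast Nat.pos_of_ne_zero hk0
    have h6 : (k:ℝ) * ((c i - M) * (x i) ^ (k-1) + s) = 0 := by linarith [hder0]; 
    have h7 : (c i - M) * (x i) ^ (k-1) + s = 0 := by
      rcases mul_eq_zero.mp h6 with h | h
      · exact absurd h (ne_of_gt hkpos)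
      · exact h
    linarith [h7]
  · -- boundary case: x i = 0; show s = 0
    have hxi : x i = 0 := hzero'.symm
    have hB0 : B = 0 := by
      simpa [hψ, hxi, zero_pow hk0] using hzero
    have hsle : s ≤ 0 := by
      by_contra hsc
      push_neg at hsc
      set a := |M - c i| with ha
      set P := (k:ℝ) * s with hP
      have hPpos : 0 < P := by
        have : (0:ℝ) < (k:ℝ) := by exact_mod_cast Nat.pos_of_ne_zero hk0
        exact mul_pos this hsc
      have ha0 : 0 ≤ a := abs_nonneg _
      have key2 : ∀ u : ℝ, 0 < u → u ≤ 1 → P ≤ a * u := by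
        intro u hu0 hu1
        have h1 := key u (le_of_lt hu0)
        rw [hψ] at h1
        simp only at h1
        rw [hB0] at h1
        -- (c i - M)*u^k + P*u ≤ 0  ⇒ P*u ≤ (M - c i)*u^k ≤ a*u^k ≤ a*u^2 ≤ a * u * u
        have h2 : P * u ≤ (M - c i) * u ^ k := by nlinarith
        have h3 : (M - c i) * u ^ k ≤ a * u ^ k := by
          apply mul_le_mul_of_nonneg_right (le_abs_self _) (pow_nonneg (le_of_lt hu0) k)
        have h4 : u ^ k ≤ u := by
          calc u ^ k ≤ u ^ 1 := pow_le_pow_of_le_one (le_of_lt hu0) hu1 (by omega)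
            _ = u := pow_one u
        have hk' : u ^ k = u ^ (k-1) * u := by
          rw [← pow_succ]; congr 1; omega
        have h2' : P ≤ (M - c i) * u ^ (k-1) := by
          rw [hk', ← mul_assoc] at h2
          exact le_of_mul_le_mul_right h2 hu0
        have h3' : (M - c i) * u ^ (k-1) ≤ a * u ^ (k-1) :=
          mul_le_mul_of_nonneg_right (le_abs_self _) (pow_nonneg hu0.le _)
        have h4' : u ^ (k-1) ≤ u := by
          calc u ^ (k-1) ≤ u ^ 1 := pow_le_pow_of_le_one hu0.le hu1 (by omega)
            _ = u := pow_one u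
        have h5' : a * u ^ (k-1) ≤ a * u := mul_le_mul_of_nonneg_left h4' ha0
        linarith
      set u := min 1 (P / (a + 1)) with hu
      have hu0 : 0 < u := lt_min one_pos (div_pos hPpos (by linarith))
      have h6 := key2 u hu0 (min_le_left _ _)
      have h7 : a * u ≤ a * (P / (a+1)) := mul_le_mul_of_nonneg_left (min_le_right _ _) ha0
      have h8 : a * (P / (a+1)) < P := by
        rw [mul_div_assoc']
        rw [div_lt_iff₀ (by linarith)]
        nlinarith
      linarith
    have hsge : 0 ≤ s := sA_nonneg E hx0 i
    have hs0 : s = 0 := le_antisymm hsle hsge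
    rw [hxi, hs0, zero_pow hk1]
    ring

lemma N_indicator {k : ℕ} (hk : k ≠ 0) (i0 : Fin n) :
    Nn k (fun j => if j = i0 then (1:ℝ) else 0) = 1 := by
  rw [Nn]
  rw [Finset.sum_congr rfl (fun j _ => show (if j = i0 then (1:ℝ) else 0) ^ k = if j = i0 then 1 else 0 by split <;> simp [zero_pow hk]),
    Finset.sum_ite_eq' Finset.univ i0 (fun _ => (1:ℝ))]
  simp

lemma F_indicator (c : Fin n → ℝ) {k : ℕ} (hk : 2 ≤ k) (E : Finset (Finset (Fin n)))
    (hunif : ∀ e ∈ E, e.card = k) (i0 : Fin n) :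
    Ff c k E (fun j => if j = i0 then (1:ℝ) else 0) = c i0 := by
  have hk0 : k ≠ 0 := by omega
  rw [Ff]
  have h1 : ∑ i, c i * (if i = i0 then (1:ℝ) else 0) ^ k = c i0 := by
    rw [Finset.sum_congr rfl (fun i _ => show c i * (if i = i0 then (1:ℝ) else 0) ^ k
        = if i = i0 then c i else 0 by split <;> simp [zero_pow hk0])]
    rw [Finset.sum_ite_eq' Finset.univ i0 c]
    simp
  have h2 : ∀ e ∈ E, ∏ j ∈ e, (if j = i0 then (1:ℝ) else 0) = 0 := by
    intro e he
    have hcard : 1 ≤ (e.erase i0).card := by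
      have := Finset.card_erase_le (s := e) (a := i0)
      have h3 : e.card - 1 ≤ (e.erase i0).card := Finset.pred_card_le_card_erase
      have := hunif e he
      omega
    obtain ⟨j, hj⟩ := Finset.card_pos.mp hcard
    have hjne : j ≠ i0 := Finset.ne_of_mem_erase hj
    exact Finset.prod_eq_zero (Finset.mem_of_mem_erase hj) (by simp [hjne])
  rw [h1, Finset.sum_congr rfl h2]
  simp

lemma N_one {k : ℕ} : Nn (n := n) k (fun _ => (1:ℝ)) = n := by
  simp [Nn]

lemma F_one (c : Fin n → ℝ) (k : ℕ) (E : Finset (Finset (Fin n))) :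
    Ff c k E (fun _ => (1:ℝ)) = (∑ i, c i) + (k : ℝ) * E.card := by
  simp [Ff]

lemma sum_hdeg {k : ℕ} (E : Finset (Finset (Fin n))) (hunif : ∀ e ∈ E, e.card = k) :
    ∑ i : Fin n, (hdeg E i : ℝ) = (k : ℝ) * E.card := by
  have h1 : ∀ i : Fin n, (hdeg E i : ℝ) = ∑ e ∈ E, if i ∈ e then (1:ℝ) else 0 := by
    intro i
    rw [hdeg, ← Finset.sum_filter]
    simp
  rw [Finset.sum_congr rfl (fun i _ => h1 i), Finset.sum_comm]
  rw [Finset.sum_congr rfl (fun e he => show (∑ i : Fin n, if i ∈ e then (1:ℝ) else 0) = (k:ℝ) by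
    rw [Finset.sum_ite_mem, Finset.univ_inter, Finset.sum_const, hunif e he]; simp)]
  rw [Finset.sum_const]
  simp [mul_comm]

end LSE

/-- For a `k`-uniform hypergraph with maximum degree `d > 0`, adjacency
tensor `A` and signless Laplacian tensor `Q`,
`max {d, 2·(Σᵢ dᵢ)/n} ≤ λ(Q) ≤ λ(A) + d`. -/
theorem largest_sign_eig_bounds {n k d : ℕ} (hk : 3 ≤ k) (hkn : k ≤ n)
    (E : Finset (Finset (Fin n))) (hunif : ∀ e ∈ E, e.card = k)
    (hdle : ∀ i, hdeg E i ≤ d) (hdmax : ∃ i, hdeg E i = d) (hd : 0 < d)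
    (lamQ lamA : ℝ) (hQ : IsLargestSignEig k E lamQ) (hA : IsLargestAdjEig k E lamA) :
    max (d : ℝ) ((2 * ∑ i : Fin n, (hdeg E i : ℝ)) / (n : ℝ)) ≤ lamQ ∧
    lamQ ≤ lamA + (d : ℝ) := by
  have hk0 : k ≠ 0 := by omega
  have hk2 : 2 ≤ k := by omega
  have hn : 0 < n := by omega
  set cQ : Fin n → ℝ := fun i => (hdeg E i : ℝ) with hcQ
  obtain ⟨xQ, hxQD, hxQmax⟩ := LSE.exists_max hk0 hn cQ E
  set MQ := LSE.Ff cQ k E xQ with hMQ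
  have eigQ : ∀ i, signAct k E xQ i = MQ * xQ i ^ (k-1) := by
    intro i
    have h := LSE.max_is_eig cQ hk2 E hunif hxQD hxQmax i
    simpa [signAct, LSE.sA, hcQ] using h
  have hxQne : xQ ≠ 0 := by
    intro h
    have h2 := hxQD.2
    rw [h, LSE.N_zero hk0] at h2
    norm_num at h2
  have hMQle : MQ ≤ lamQ := hQ.2 MQ ⟨xQ, hxQne, eigQ⟩
  obtain ⟨i0, hi0⟩ := hdmax
  have hdMQ : (d : ℝ) ≤ MQ := by
    have h1 := LSE.homog_bound cQ hk0 E hunif hxQD hxQmax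
      (y := fun j => if j = i0 then (1:ℝ) else 0) (by intro i; positivity)
    rw [LSE.F_indicator cQ hk2 E hunif i0, LSE.N_indicator hk0 i0] at h1
    have h2 : cQ i0 = (d : ℝ) := by rw [hcQ]; exact_mod_cast congrArg Nat.cast hi0
    rw [h2, mul_one] at h1
    exact h1
  have havg : (2 * ∑ i : Fin n, (hdeg E i : ℝ)) / (n : ℝ) ≤ MQ := by
    have h1 := LSE.homog_bound cQ hk0 E hunif hxQD hxQmax
      (y := fun _ => (1:ℝ)) (fun i => zero_le_one)
    rw [LSE.F_one, LSE.N_one] at h1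
    have hsum : ∑ i : Fin n, cQ i = (k : ℝ) * E.card := LSE.sum_hdeg E hunif
    have hsum2 : ∑ i : Fin n, (hdeg E i : ℝ) = (k : ℝ) * E.card := LSE.sum_hdeg E hunif
    have hnpos : (0:ℝ) < n := by exact_mod_cast hn
    rw [div_le_iff₀ hnpos]
    calc 2 * ∑ i : Fin n, (hdeg E i : ℝ) = (∑ i : Fin n, cQ i) + (k : ℝ) * E.card := by
          rw [hsum]; try rw [hsum2]
          ring
      _ ≤ MQ * n := h1
  -- adjacency side
  obtain ⟨xA, hxAD, hxAmax⟩ := LSE.exists_max hk0 hn (fun _ => (0:ℝ)) E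
  set MA := LSE.Ff (fun _ => (0:ℝ)) k E xA with hMA
  have eigA : ∀ i, adjAct E xA i = MA * xA i ^ (k-1) := by
    intro i
    have h := LSE.max_is_eig (fun _ => (0:ℝ)) hk2 E hunif hxAD hxAmax i
    simpa [adjAct, LSE.sA] using h
  have hxAne : xA ≠ 0 := by
    intro h
    have h2 := hxAD.2
    rw [h, LSE.N_zero hk0] at h2
    norm_num at h2
  have hMAle : MA ≤ lamA := hA.2 MA ⟨xA, hxAne, eigA⟩
  have hMQMA : MQ ≤ (d : ℝ) + MA := by
    have h2 : (∑ i, cQ i * xQ i ^ k) ≤ (d:ℝ) * ∑ i, xQ i ^ k := by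
      rw [Finset.mul_sum]
      apply Finset.sum_le_sum
      intro i _
      apply mul_le_mul_of_nonneg_right _ (pow_nonneg (hxQD.1 i) k)
      have hcle : (hdeg E i : ℝ) ≤ (d:ℝ) := by exact_mod_cast hdle i
      exact hcle
    have h3 := LSE.homog_bound (fun _ => (0:ℝ)) hk0 E hunif hxAD hxAmax (y := xQ) hxQD.1
    have h4 : LSE.Nn k xQ = 1 := hxQD.2
    have h5 : LSE.Ff (fun _ => (0:ℝ)) k E xQ = (k:ℝ) * ∑ e ∈ E, ∏ j ∈ e, xQ j := by
      simp [LSE.Ff]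
    have h6 : MQ = (∑ i, cQ i * xQ i ^ k) + (k:ℝ) * ∑ e ∈ E, ∏ j ∈ e, xQ j := rfl
    have h7 : LSE.Nn k xQ = ∑ i, xQ i ^ k := rfl
    rw [h4, mul_one, h5, ← hMA] at h3
    rw [h7] at h4
    rw [h4, mul_one] at h2
    rw [h6]
    linarith
  -- lamQ ≤ MQ via the modulus argument
  have hlamQpos : (0:ℝ) < lamQ := by
    have hd' : (0:ℝ) < d := by exact_mod_cast hd
    linarith
  have hlamQMQ : lamQ ≤ MQ := by
    obtain ⟨x, hxne, hxeig⟩ := hQ.1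
    set y : Fin n → ℝ := fun i => |x i| with hy
    have hy0 : ∀ i, 0 ≤ y i := fun i => abs_nonneg _
    have step1 : ∀ i, lamQ * y i ^ (k-1) ≤ cQ i * y i ^ (k-1) + LSE.sA E y i := by
      intro i
      have h1 : lamQ * y i ^ (k-1) = |lamQ * x i ^ (k-1)| := by
        rw [abs_mul, abs_of_pos hlamQpos, abs_pow]
      have h2 : |signAct k E x i| ≤ (hdeg E i : ℝ) * |x i| ^ (k-1)
          + ∑ e ∈ E.filter (fun e => i ∈ e), ∏ j ∈ e.erase i, |x j| := by
        rw [signAct]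
        refine le_trans (abs_add_le _ _) (add_le_add ?_ ?_)
        · rw [abs_mul, abs_pow, Nat.abs_cast]
        · refine le_trans (Finset.abs_sum_le_sum_abs _ _) ?_
          apply Finset.sum_le_sum
          intro e _
          rw [Finset.abs_prod]
      rw [h1, ← hxeig i]
      exact h2
    have step2 : lamQ * LSE.Nn k y ≤ LSE.Ff cQ k E y := by
      rw [LSE.F_eq cQ hk0 E hunif y, LSE.Nn, Finset.mul_sum]
      apply Finset.sum_le_sum
      intro i _
      have h3 := mul_le_mul_of_nonneg_left (step1 i) (hy0 i)
      calc lamQ * y i ^ k = y i * (lamQ * y i ^ (k-1)) := by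
            rw [← pow_sub_one_mul hk0 (y i)]; ring
        _ ≤ y i * (cQ i * y i ^ (k-1) + LSE.sA E y i) := h3
    have hNy : 0 < LSE.Nn k y := by
      obtain ⟨i, hi⟩ := Function.ne_iff.mp hxne
      have hi' : x i ≠ 0 := by simpa using hi
      apply Finset.sum_pos' (fun j _ => pow_nonneg (hy0 j) k)
      exact ⟨i, Finset.mem_univ i, pow_pos (abs_pos.mpr hi') k⟩
    have step3 := LSE.homog_bound cQ hk0 E hunif hxQD hxQmax hy0
    have h8 : lamQ * LSE.Nn k y ≤ MQ * LSE.Nn k y := le_trans step2 step3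
    exact le_of_mul_le_mul_right h8 hNy
  constructor
  · exact max_le (le_trans hdMQ hMQle) (le_trans havg hMQle)
  · linarith
end

section
/- Let G=(V,E) be a k-uniform regular connected hypergraph in which every vertex has degree d>0, and let Q be its signless Laplacian tensor. Then λ(Q) = 2d. -/
open Finset

variable {α : Type*} [DecidableEq α]

/-- For a `k`-uniform regular connected hypergraph in which every vertex
has degree `d > 0`, with signless Laplacian tensor `Q`, we have `λ(Q) = 2d`. -/
theorem largest_sign_eig_regular {n k d : ℕ} (hk : 3 ≤ k) (hkn : k ≤ n)
    (E : Finset (Finset (Fin n))) (hunif : ∀ e ∈ E, e.card = k)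
    (hconn : IsConnectedH E) (hreg : ∀ i, hdeg E i = d) (hd : 0 < d)
    (lam : ℝ) (hlam : IsLargestSignEig k E lam) :
    lam = 2 * (d : ℝ) := by
  have hn : 0 < n := lt_of_lt_of_le (by omega) hkn
  -- 2d is an eigenvalue, witnessed by the all-ones vector
  have h2d : IsSignEig k E (2 * (d : ℝ)) := by
    refine ⟨fun _ => 1, ?_, ?_⟩
    · intro h
      have := congrFun h ⟨0, hn⟩
      simp at this
    · intro i
      have h := hreg i
      rw [hdeg] at h
      simp [signAct, hdeg, h]
      ring
  -- every eigenvalue is ≤ 2d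
  have hle : ∀ mu : ℝ, IsSignEig k E mu → mu ≤ 2 * (d : ℝ) := by
    rintro mu ⟨x, hx0, hxe⟩
    obtain ⟨i, -, hi⟩ := Finset.exists_max_image (Finset.univ : Finset (Fin n))
      (fun j => |x j|) ⟨⟨0, hn⟩, Finset.mem_univ _⟩
    set M := |x i| with hM
    have hMpos : 0 < M := by
      by_contra h
      push_neg at h
      apply hx0
      funext j
      have hj := hi j (Finset.mem_univ j)
      have : |x j| ≤ 0 := le_trans hj h
      simpa using (abs_nonpos_iff.mp this)
    have key := hxe i
    rw [signAct] at key
    have heq : (mu - d) * x i ^ (k - 1)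
        = ∑ e ∈ E.filter (fun e => i ∈ e), ∏ j ∈ e.erase i, x j := by
      rw [hreg i] at key; linarith
    have hbound : |∑ e ∈ E.filter (fun e => i ∈ e), ∏ j ∈ e.erase i, x j|
        ≤ (d : ℝ) * M ^ (k - 1) := by
      calc |∑ e ∈ E.filter (fun e => i ∈ e), ∏ j ∈ e.erase i, x j|
          ≤ ∑ e ∈ E.filter (fun e => i ∈ e), |∏ j ∈ e.erase i, x j| :=
            Finset.abs_sum_le_sum_abs _ _
        _ ≤ ∑ _e ∈ E.filter (fun e => i ∈ e), M ^ (k - 1) := by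
            apply Finset.sum_le_sum
            intro e he
            rw [Finset.mem_filter] at he
            rw [Finset.abs_prod]
            have hcard : (e.erase i).card = k - 1 := by
              rw [Finset.card_erase_of_mem he.2, hunif e he.1]
            calc ∏ j ∈ e.erase i, |x j| ≤ ∏ _j ∈ e.erase i, M := by
                  apply Finset.prod_le_prod
                  · intro j _; exact abs_nonneg _
                  · intro j _; exact hi j (Finset.mem_univ j)
              _ = M ^ (k - 1) := by rw [Finset.prod_const, hcard]
        _ = (d : ℝ) * M ^ (k - 1) := by
            rw [Finset.sum_const, nsmul_eq_mul]
            congr 1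
            exact_mod_cast congrArg (Nat.cast : ℕ → ℝ) (hreg i)
    have habs : |mu - d| * M ^ (k - 1) ≤ (d : ℝ) * M ^ (k - 1) := by
      calc |mu - d| * M ^ (k - 1) = |mu - d| * |x i ^ (k - 1)| := by
            rw [abs_pow]
        _ = |(mu - d) * x i ^ (k - 1)| := (abs_mul _ _).symm
        _ = |∑ e ∈ E.filter (fun e => i ∈ e), ∏ j ∈ e.erase i, x j| := by rw [heq]
        _ ≤ (d : ℝ) * M ^ (k - 1) := hbound
    have hMpow : 0 < M ^ (k - 1) := pow_pos hMpos _
    have : |mu - d| ≤ (d : ℝ) := le_of_mul_le_mul_right habs hMpow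
    have := abs_le.mp this
    linarith [this.2]
  exact le_antisymm (hle lam hlam.1) (hlam.2 _ h2d)
end

section
/- Let G=(V,E) be a k-uniform hypercycle of size s>0 and let Q be its signless Laplacian tensor. Then the equation 2β^k+β^2−1=0 has a unique positive real solution β, this β lies in the interval (1/2,1), and λ(Q) = 2+2β^{k−2}. -/
open Finset

variable {α : Type*} [DecidableEq α]

lemma beta_aux {k : ℕ} (hk : 3 ≤ k) :
    ∃ b : ℝ, (0 < b ∧ 2 * b ^ k + b ^ 2 - 1 = 0) ∧
      (∀ c : ℝ, 0 < c → 2 * c ^ k + c ^ 2 - 1 = 0 → c = b) ∧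
      b ∈ Set.Ioo (1 / 2 : ℝ) 1 := by
  have hmono : StrictMonoOn (fun b : ℝ => 2 * b ^ k + b ^ 2 - 1) (Set.Ici 0) := by
    intro a ha b hb hab
    simp only [Set.mem_Ici] at ha hb
    have h1 : a ^ k < b ^ k := pow_lt_pow_left₀ hab ha (by omega)
    have h2 : a ^ 2 < b ^ 2 := pow_lt_pow_left₀ hab ha (by omega)
    simp only
    nlinarith
  have hcont : ContinuousOn (fun b : ℝ => 2 * b ^ k + b ^ 2 - 1) (Set.Icc (1/2) 1) :=
    (by continuity : Continuous fun b : ℝ => 2 * b ^ k + b ^ 2 - 1).continuousOn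
  have hhalf : 2 * (1/2:ℝ) ^ k + (1/2:ℝ) ^ 2 - 1 < 0 := by
    have : (1/2:ℝ)^k ≤ (1/2:ℝ)^3 := pow_le_pow_of_le_one (by norm_num) (by norm_num) hk
    nlinarith
  have hone : (0:ℝ) < 2 * (1:ℝ) ^ k + (1:ℝ) ^ 2 - 1 := by norm_num
  have hsub := intermediate_value_Ioo (by norm_num : (1/2:ℝ) ≤ 1) hcont
  have h0mem : (0:ℝ) ∈ Set.Ioo (2 * (1/2:ℝ) ^ k + (1/2:ℝ) ^ 2 - 1) (2 * (1:ℝ) ^ k + (1:ℝ) ^ 2 - 1) :=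
    ⟨hhalf, hone⟩
  obtain ⟨b, hbmem, hb0⟩ := hsub h0mem
  refine ⟨b, ⟨lt_trans (by norm_num) hbmem.1, hb0⟩, ?_, hbmem⟩
  intro c hc hc0
  exact hmono.injOn (Set.mem_Ici.2 hc.le)
    (Set.mem_Ici.2 (le_trans (by norm_num) hbmem.1.le)) (by simp only at hb0 ⊢; rw [hc0, hb0])

open Finset in
lemma sign_compare {α : Type*} [DecidableEq α] [Fintype α] {k : ℕ} (hk : 3 ≤ k)
    {E : Finset (Finset α)} (hcard : ∀ e ∈ E, e.card = k)
    {x : α → ℝ} (hx : ∀ i, 0 < x i) {L : ℝ}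
    (hL : ∀ i, signAct k E x i = L * x i ^ (k - 1))
    {mu : ℝ} (hmu0 : 0 ≤ mu) (h : IsSignEig k E mu) : mu ≤ L := by
  obtain ⟨y', hy'ne, heig⟩ := h
  set y : α → ℝ := fun i => |y' i| with hy
  have hyne : ∃ j, 0 < y j := by
    by_contra hcon
    push_neg at hcon
    apply hy'ne
    funext j
    have := hcon j
    simp only [hy] at this
    have : |y' j| = 0 := le_antisymm this (abs_nonneg _)
    simpa using this
  obtain ⟨j0, hj0⟩ := hyne
  have hne : (Finset.univ : Finset α).Nonempty := ⟨j0, mem_univ _⟩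
  obtain ⟨i0, -, hi0max⟩ := Finset.exists_max_image Finset.univ (fun i => y i / x i) hne
  set t : ℝ := y i0 / x i0 with ht
  have htpos : 0 < t := lt_of_lt_of_le (div_pos hj0 (hx j0)) (hi0max j0 (mem_univ _))
  have hyle : ∀ j, y j ≤ t * x j := by
    intro j
    have := hi0max j (mem_univ _)
    rw [div_le_iff₀ (hx j)] at this
    linarith [this]
  have hyi0 : y i0 = t * x i0 := by
    rw [ht, div_mul_cancel₀ _ (hx i0).ne']
  have hynn : ∀ j, 0 ≤ y j := fun j => abs_nonneg _
  -- subeigenvector inequality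
  have hsub : ∀ i, mu * y i ^ (k - 1) ≤ signAct k E y i := by
    intro i
    have h1 : mu * y i ^ (k - 1) = |mu * y' i ^ (k - 1)| := by
      rw [abs_mul, abs_of_nonneg hmu0, abs_pow]
    rw [h1, ← heig i]
    unfold signAct
    refine le_trans (abs_add_le _ _) (add_le_add ?_ ?_)
    · rw [abs_mul, abs_pow, Nat.abs_cast]
    · refine le_trans (Finset.abs_sum_le_sum_abs _ _) (le_of_eq ?_)
      refine Finset.sum_congr rfl fun e he => ?_
      rw [Finset.abs_prod]
  -- main estimate at i0
  have hkey : mu * y i0 ^ (k - 1) ≤ L * y i0 ^ (k - 1) := by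
    refine le_trans (hsub i0) ?_
    have h2 : signAct k E y i0 ≤ t ^ (k - 1) * signAct k E x i0 := by
      unfold signAct
      rw [mul_add]
      refine add_le_add ?_ ?_
      · rw [hyi0, mul_pow]
        ring_nf
        exact le_of_eq (by ring)
      · rw [Finset.mul_sum]
        refine Finset.sum_le_sum fun e he => ?_
        simp only [Finset.mem_filter] at he
        have hec : (e.erase i0).card = k - 1 := by
          rw [Finset.card_erase_of_mem he.2, hcard e he.1]
        calc ∏ j ∈ e.erase i0, y j ≤ ∏ j ∈ e.erase i0, (t * x j) :=
              Finset.prod_le_prod (fun j _ => hynn j) (fun j _ => hyle j)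
          _ = t ^ (k-1) * ∏ j ∈ e.erase i0, x j := by
              rw [Finset.prod_mul_distrib, Finset.prod_const, hec]
    refine le_trans h2 ?_
    rw [hL i0, hyi0, mul_pow]
    exact le_of_eq (by ring)
  have : 0 < y i0 ^ (k - 1) := pow_pos (by rw [hyi0]; exact mul_pos htpos (hx i0)) _
  exact le_of_mul_le_mul_right (by linarith [hkey]) this

/-- For a `k`-uniform hypercycle of size `s > 0` with signless Laplacian
tensor `Q`, the equation `2β^k + β^2 - 1 = 0` has a unique positive real solution `β`,
this `β` lies in `(1/2, 1)`, and `λ(Q) = 2 + 2β^(k-2)`. -/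
theorem largest_sign_eig_hypercycle {k s n : ℕ} [NeZero s] (hk : 3 ≤ k) (hs : 0 < s)
    (hn : n = s * (k - 1)) (E : Finset (Finset (Fin n)))
    (hcyc : IsHypercycle k s E) (lam : ℝ) (hlam : IsLargestSignEig k E lam) :
    ∃ b : ℝ, (0 < b ∧ 2 * b ^ k + b ^ 2 - 1 = 0) ∧
      (∀ c : ℝ, 0 < c → 2 * c ^ k + c ^ 2 - 1 = 0 → c = b) ∧
      b ∈ Set.Ioo (1 / 2 : ℝ) 1 ∧
      lam = 2 + 2 * b ^ (k - 2) := by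
  obtain ⟨b, ⟨hb0, hbeq⟩, huniq, hbIoo⟩ := beta_aux hk
  refine ⟨b, ⟨hb0, hbeq⟩, huniq, hbIoo, ?_⟩
  obtain ⟨P, hPcard, hPcover, hEdef, hPint, hPdisj, hPinj'⟩ := hcyc
  -- s ≥ 3
  have hs3 : 3 ≤ s := by
    by_contra hcon
    have : s = 1 ∨ s = 2 := by omega
    rcases this with rfl | rfl
    · have h1 := hPint 0
      have e0 : (0 + 1 : Fin 1) = 0 := rfl
      rw [e0, Finset.inter_self, hPcard 0] at h1
      omega
    · have heq : (fun i : Fin 2 => P i ∩ P (i + 1)) 0 = (fun i : Fin 2 => P i ∩ P (i + 1)) 1 := by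
        have e1 : (0 + 1 : Fin 2) = 1 := rfl
        have e2 : (1 + 1 : Fin 2) = 0 := rfl
        simp only [e1, e2]
        exact Finset.inter_comm _ _
      exact absurd (congrArg Fin.val (hPinj' heq)) (by norm_num)
  have hone0 : (1 : Fin s) ≠ 0 := by
    intro h
    have := congrArg Fin.val h
    rw [Fin.val_one', Nat.mod_eq_of_lt (by omega)] at this
    simp only [Fin.val_zero] at this
    exact one_ne_zero this
  have hne1 : ∀ i : Fin s, i ≠ i + 1 := by
    intro i h
    exact hone0 (left_eq_add.mp h)
  have hsub1 : ∀ i : Fin s, i - 1 ≠ i := by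
    intro i h
    exact hone0 (by rwa [sub_eq_self] at h)
  have hsubadd : ∀ i : Fin s, i - 1 + 1 = i := fun i => sub_add_cancel i 1
  -- P is injective
  have hPinj : Function.Injective P := by
    intro i j hij
    by_contra hne
    rcases eq_or_ne j (i + 1) with rfl | hj
    · have h1 := hPint i
      rw [hij, Finset.inter_self, hPcard] at h1
      omega
    rcases eq_or_ne i (j + 1) with rfl | hi
    · have h1 := hPint j
      rw [← hij, Finset.inter_self, hPcard] at h1
      omega
    · have h1 := hPdisj i j hne hj hi
      rw [hij, Finset.inter_self] at h1
      have := hPcard j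
      rw [h1] at this
      simp at this
      omega
  -- the D sets
  set D : Fin n → Finset (Fin s) := fun v => Finset.univ.filter (fun i => v ∈ P i) with hD
  have hEfilter : ∀ v, E.filter (fun e => v ∈ e) = (D v).image P := by
    intro v
    rw [hEdef, Finset.filter_image]
  have hdegD : ∀ v, hdeg E v = (D v).card := by
    intro v
    rw [hdeg, hEfilter, Finset.card_image_of_injective _ hPinj]
  -- the intersection vertices
  have hsing : ∀ i : Fin s, ∃ a, P i ∩ P (i + 1) = {a} := fun i => Finset.card_eq_one.mp (hPint i)
  choose w hw using hsing
  have hwmem1 : ∀ i, w i ∈ P i := fun i =>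
    (Finset.mem_inter.mp (by rw [hw i]; exact Finset.mem_singleton_self _)).1
  have hwmem2 : ∀ i, w i ∈ P (i + 1) := fun i =>
    (Finset.mem_inter.mp (by rw [hw i]; exact Finset.mem_singleton_self _)).2
  have hmemw : ∀ {v : Fin n} {i : Fin s}, v ∈ P i → v ∈ P (i + 1) → v = w i := by
    intro v i h1 h2
    have : v ∈ P i ∩ P (i + 1) := Finset.mem_inter.mpr ⟨h1, h2⟩
    rw [hw i] at this
    exact Finset.mem_singleton.mp this
  have hwinj : Function.Injective w := by
    intro i j h
    apply hPinj'
    simp only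
    rw [hw i, hw j, h]
  -- adjacency
  have hadj : ∀ {v : Fin n} {i j : Fin s}, v ∈ P i → v ∈ P j → i ≠ j → j = i + 1 ∨ i = j + 1 := by
    intro v i j h1 h2 hne
    by_contra h
    push_neg at h
    have hd := hPdisj i j hne h.1 h.2
    have : v ∈ P i ∩ P j := Finset.mem_inter.mpr ⟨h1, h2⟩
    rw [hd] at this
    exact absurd this (Finset.notMem_empty v)
  -- classification of D
  have hDw : ∀ i : Fin s, D (w i) = {i, i + 1} := by
    intro i
    ext l
    simp only [hD, Finset.mem_filter, Finset.mem_univ, true_and, Finset.mem_insert,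
      Finset.mem_singleton]
    constructor
    · intro hl
      by_contra hcon
      push_neg at hcon
      rcases hadj hl (hwmem1 i) (fun h => hcon.1 h) with h | h
      · have hwl : w i = w l := hmemw hl (by rw [← h]; exact hwmem1 i)
        have hil := hwinj hwl
        rw [hil] at h
        exact hne1 l h
      · exact hcon.2 h
    · intro hl
      rcases hl with rfl | rfl
      · exact hwmem1 l
      · exact hwmem2 _
  have hDother : ∀ v, (∀ i, v ≠ w i) → ∀ i, v ∈ P i → D v = {i} := by
    intro v hv i hvi
    ext l
    simp only [hD, Finset.mem_filter, Finset.mem_univ, true_and, Finset.mem_singleton]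
    constructor
    · intro hl
      by_contra hcon
      rcases hadj hvi hl (fun h => hcon h.symm) with h | h
      · exact hv i (hmemw hvi (by rwa [← h]))
      · exact hv l (hmemw hl (by rwa [← h]))
    · intro h; rwa [h]
  have hdeg2 : ∀ i, hdeg E (w i) = 2 := by
    intro i
    rw [hdegD, hDw]
    rw [Finset.card_insert_of_notMem (by simp [hne1 i]), Finset.card_singleton]
  have hdeg1 : ∀ v, (∀ i, v ≠ w i) → hdeg E v = 1 := by
    intro v hv
    obtain ⟨i, hi⟩ := hPcover v
    rw [hdegD, hDother v hv i hi, Finset.card_singleton]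
  have hdegw : ∀ v, hdeg E v = 2 → ∃ i, v = w i := by
    intro v h2
    by_contra hcon
    push_neg at hcon
    rw [hdeg1 v hcon] at h2
    omega
  -- the degree-2 vertices of edge P i
  have hfilter2 : ∀ i : Fin s, (P i).filter (fun v => hdeg E v = 2) = {w (i - 1), w i} := by
    intro i
    ext v
    simp only [Finset.mem_filter, Finset.mem_insert, Finset.mem_singleton]
    constructor
    · rintro ⟨hvi, h2⟩
      obtain ⟨j, rfl⟩ := hdegw v h2
      have : i ∈ D (w j) := by simp [hD, hvi]
      rw [hDw j] at this
      simp only [Finset.mem_insert, Finset.mem_singleton] at this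
      rcases this with rfl | rfl
      · right; rfl
      · left
        congr 1
        rw [eq_sub_iff_add_eq]
    · rintro (rfl | rfl)
      · constructor
        · have := hwmem2 (i - 1)
          rwa [hsubadd i] at this
        · exact hdeg2 _
      · exact ⟨hwmem1 i, hdeg2 i⟩
  have hwne : ∀ i : Fin s, w (i - 1) ≠ w i := by
    intro i h
    exact hsub1 i (hwinj h)
  have hfiltercard : ∀ i : Fin s, ((P i).filter (fun v => ¬ hdeg E v = 2)).card = k - 2 := by
    intro i
    have h1 := Finset.card_filter_add_card_filter_not (s := P i)
      (p := fun v => hdeg E v = 2)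
    rw [hfilter2 i, hPcard i] at h1
    rw [Finset.card_insert_of_notMem (by simp [hwne i]), Finset.card_singleton] at h1
    omega
  -- edge cards
  have hcardE : ∀ e ∈ E, e.card = k := by
    intro e he
    rw [hEdef] at he
    obtain ⟨i, -, rfl⟩ := Finset.mem_image.mp he
    exact hPcard i
  -- the eigenvector
  set x : Fin n → ℝ := fun v => if hdeg E v = 2 then 1 else b with hx
  have hxpos : ∀ v, 0 < x v := by
    intro v
    simp only [hx]
    split <;> [norm_num; exact hb0]
  have hsum : ∀ v, signAct k E x v =
      (D v).card * x v ^ (k - 1) + ∑ i ∈ D v, ∏ j ∈ (P i).erase v, x j := by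
    intro v
    rw [signAct, hdegD, hEfilter v, Finset.sum_image (fun a _ c _ h => hPinj h)]
  have hprod : ∀ (i : Fin s) (v : Fin n), ∏ j ∈ (P i).erase v, x j =
      b ^ (((P i).erase v).filter (fun j => ¬ hdeg E j = 2)).card := by
    intro i v
    rw [Finset.prod_ite, Finset.prod_const, Finset.prod_const, one_pow, one_mul]
  have hcount : ∀ (i : Fin s) (v : Fin n), v ∈ P i →
      (((P i).erase v).filter (fun j => ¬ hdeg E j = 2)).card
        = if hdeg E v = 2 then k - 2 else k - 3 := by
    intro i v hv
    rw [Finset.filter_erase]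
    by_cases h2 : hdeg E v = 2
    · rw [if_pos h2, Finset.erase_eq_of_notMem (by simp [h2]), hfiltercard i]
    · rw [if_neg h2, Finset.card_erase_of_mem (Finset.mem_filter.mpr ⟨hv, h2⟩),
        hfiltercard i]
      omega
  have hxeig : ∀ v, signAct k E x v = (2 + 2 * b ^ (k - 2)) * x v ^ (k - 1) := by
    intro v
    rw [hsum v]
    by_cases hv2 : hdeg E v = 2
    · obtain ⟨j, rfl⟩ := hdegw v hv2
      have hxv : x (w j) = 1 := if_pos hv2
      rw [hDw j, Finset.sum_pair (hne1 j), hprod j, hprod (j + 1),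
        hcount j _ (hwmem1 j), hcount (j + 1) _ (hwmem2 j), if_pos hv2, hxv]
      rw [Finset.card_insert_of_notMem (by simp [hne1 j]), Finset.card_singleton]
      push_cast
      ring
    · have hvnw : ∀ i, v ≠ w i := by
        intro i h
        exact hv2 (h ▸ hdeg2 i)
      obtain ⟨i, hvi⟩ := hPcover v
      have hxv : x v = b := if_neg hv2
      rw [hDother v hvnw i hvi, Finset.sum_singleton, hprod i, hcount i v hvi, if_neg hv2,
        Finset.card_singleton, hxv]
      have h1 : 2 * b ^ k + b ^ 2 = 1 := by linarith
      have p1 : b ^ (k - 3) * b ^ 2 = b ^ (k - 1) := by rw [← pow_add]; congr 1; omega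
      have p2 : b ^ (k - 3) * b ^ k = b ^ (2 * k - 3) := by rw [← pow_add]; congr 1; omega
      have p3 : b ^ (k - 2) * b ^ (k - 1) = b ^ (2 * k - 3) := by rw [← pow_add]; congr 1; omega
      have e1 : b ^ (k - 3) * (2 * b ^ k + b ^ 2) = b ^ (k - 3) := by rw [h1, mul_one]
      push_cast
      nlinarith [e1, p1, p2, p3]
  have hnpos : 0 < n := by
    rw [hn]
    have : 2 ≤ k - 1 := by omega
    nlinarith
  have hxne : x ≠ 0 := by
    intro h
    have := congrFun h ⟨0, hnpos⟩
    simp only [Pi.zero_apply] at this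
    exact absurd this (ne_of_gt (hxpos _))
  have heig : IsSignEig k E (2 + 2 * b ^ (k - 2)) := ⟨x, hxne, hxeig⟩
  have hge : (2 + 2 * b ^ (k - 2)) ≤ lam := hlam.2 _ heig
  have hlstpos : (0:ℝ) < 2 + 2 * b ^ (k - 2) := by
    have : 0 < b ^ (k - 2) := pow_pos hb0 _
    linarith
  have hle : lam ≤ 2 + 2 * b ^ (k - 2) := sign_compare hk hcardE hxpos hxeig (by linarith) hlam.1
  linarith
end
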